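/- Let 0 < β₀ < β₁ and 0 < θ < 1, and set β = (1−θ) β₀ + θ β₁. Then the interpolation space obtained by the K-method of Peetre satisfies (Λ_A^{β₀}, Λ_A^{β₁})_θ = Λ_A^β as sets, and there is a constant C > 1 such that C^{−1} ‖x*‖_{Λ_A^β} ≤ ‖x*‖_θ ≤ C ‖x*‖_{Λ_A^β} for all x* in these spaces. -/

import Mathlib

open Filter Topology MeasureTheory Set

noncomputable section

variable {X : Type*} [NormedAddCommGroup X] [NormedSpace ℂ X] [CompleteSpace X]

/-- The `n`-th derivative on `(0,∞)` of the orbit `t ↦ x* ∘ T t` of the dual semigroup. -/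
def dualDeriv (T : ℝ → X →L[ℂ] X) (n : ℕ) (xs : X →L[ℂ] ℂ) (t : ℝ) : X →L[ℂ] ℂ :=
  iteratedDerivWithin n (fun s => xs.comp (T s)) (Set.Ioi 0) t

/-- A uniformly bounded, strongly continuous holomorphic semigroup on `(0,∞)`,
together with the standard properties of its time derivatives. -/
structure IsHoloSG (T : ℝ → X →L[ℂ] X) : Prop where
  semigroup : ∀ s t : ℝ, 0 < s → 0 < t → T (s + t) = (T s).comp (T t)
  strong : ∀ x : X, Tendsto (fun t => T t x) (𝓝[>] (0:ℝ)) (𝓝 x)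
  bounded : ∃ M : ℝ, ∀ t : ℝ, 0 < t → ‖T t‖ ≤ M
  smooth : ContDiffOn ℝ (⊤ : ℕ∞) T (Set.Ioi 0)
  derivComp : ∀ n : ℕ, ∀ s t : ℝ, 0 < s → 0 < t →
    iteratedDerivWithin n T (Set.Ioi 0) (t + s)
      = (iteratedDerivWithin n T (Set.Ioi 0) t).comp (T s)
  derivBound : ∃ C : ℝ, 0 < C ∧ ∀ n : ℕ, 1 ≤ n → ∀ t : ℝ, 0 < t →
    ‖iteratedDerivWithin n T (Set.Ioi 0) t‖ ≤ C ^ n / t ^ n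


/-- The smallest integer `> β` (for `β > 0`). -/
def mExp (β : ℝ) : ℕ := ⌊β⌋₊ + 1

/-- Membership in the Lipschitz space `Λ_A^β`. -/
def MemLambda (T : ℝ → X →L[ℂ] X) (β : ℝ) (xs : X →L[ℂ] ℂ) : Prop :=
  ∃ C : ℝ, ∀ t : ℝ, 0 < t →
    ‖dualDeriv T (mExp β) xs t‖ ≤ C * t ^ (β - (mExp β : ℝ))

/-- The norm of the Lipschitz space `Λ_A^β`. -/
def lambdaNorm (T : ℝ → X →L[ℂ] X) (β : ℝ) (xs : X →L[ℂ] ℂ) : ℝ :=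
  ‖xs‖ + ⨆ t : Set.Ioi (0:ℝ),
    (t : ℝ) ^ ((mExp β : ℝ) - β) * ‖dualDeriv T (mExp β) xs t‖

/-- The Peetre K-functional for the couple `(Λ_A^{β₀}, Λ_A^{β₁})`. -/
def Kfun (T : ℝ → X →L[ℂ] X) (β₀ β₁ t : ℝ) (xs : X →L[ℂ] ℂ) : ℝ :=
  sInf {v : ℝ | ∃ x0 x1 : X →L[ℂ] ℂ, MemLambda T β₀ x0 ∧ MemLambda T β₁ x1 ∧
    xs = x0 + x1 ∧ v = lambdaNorm T β₀ x0 + t * lambdaNorm T β₁ x1}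

namespace SG17

lemma udo : UniqueDiffOn ℝ (Set.Ioi (0:ℝ)) := isOpen_Ioi.uniqueDiffOn

lemma natlt (n : ℕ) : ((n : ℕ∞) : WithTop ℕ∞) < ((⊤:ℕ∞) : WithTop ℕ∞) :=
  WithTop.coe_lt_coe.2 (WithTop.coe_lt_top n)

variable {T : ℝ → X →L[ℂ] X}

/-- the left-composition CLM over ℝ -/
def cmpL (z : X →L[ℂ] ℂ) : (X →L[ℂ] X) →L[ℝ] (X →L[ℂ] ℂ) :=
  ((ContinuousLinearMap.compL ℂ X X ℂ) z).restrictScalars ℝ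

lemma orbSmooth (hT : IsHoloSG T) (z : X →L[ℂ] ℂ) :
    ContDiffOn ℝ (⊤ : ℕ∞) (fun s => z.comp (T s)) (Set.Ioi 0) :=
  (cmpL z).contDiff.comp_contDiffOn hT.smooth

lemma dualDeriv_eq (hT : IsHoloSG T) (z : X →L[ℂ] ℂ) (n : ℕ) {t : ℝ} (ht : t ∈ Set.Ioi (0:ℝ)) :
    dualDeriv T n z t = z.comp (iteratedDerivWithin n T (Set.Ioi 0) t) := by
  have h := (cmpL z).iteratedFDerivWithin_comp_left (hT.smooth t ht) udo ht
    (natlt n).le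
  have h2 : dualDeriv T n z t =
      iteratedFDerivWithin ℝ n ((cmpL z) ∘ T) (Set.Ioi 0) t (fun _ => 1) := by
    rw [dualDeriv, iteratedDerivWithin_eq_iteratedFDerivWithin]; rfl
  rw [h2, h, ContinuousLinearMap.compContinuousMultilinearMap_coe]
  simp only [Function.comp_apply]
  rw [← iteratedDerivWithin_eq_iteratedFDerivWithin]
  rfl

/-- Generic: a ContDiffOn ⊤ function on `Ioi 0` has `HasDerivAt` for its
iterated derivatives within. -/
lemma hasDerivAt_iterDW {F : Type*} [NormedAddCommGroup F] [NormedSpace ℝ F] {f : ℝ → F}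
    (hf : ContDiffOn ℝ (⊤ : ℕ∞) f (Set.Ioi 0)) (n : ℕ) {t : ℝ} (ht : 0 < t) :
    HasDerivAt (iteratedDerivWithin n f (Set.Ioi 0))
      (iteratedDerivWithin (n + 1) f (Set.Ioi 0) t) t := by
  have hdiff : DifferentiableOn ℝ (iteratedDerivWithin n f (Set.Ioi 0)) (Set.Ioi 0) :=
    hf.differentiableOn_iteratedDerivWithin (natlt n) udo
  have h1 := (hdiff t ht).hasDerivWithinAt
  have h2 := h1.hasDerivAt (Ioi_mem_nhds ht)
  have h3 : derivWithin (iteratedDerivWithin n f (Set.Ioi 0)) (Set.Ioi 0) t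
      = iteratedDerivWithin (n + 1) f (Set.Ioi 0) t :=
    (congrFun iteratedDerivWithin_succ t).symm
  rwa [h3] at h2

lemma hasDerivAt_dd (hT : IsHoloSG T) (z : X →L[ℂ] ℂ) (n : ℕ) {t : ℝ} (ht : 0 < t) :
    HasDerivAt (dualDeriv T n z) (dualDeriv T (n + 1) z t) t :=
  hasDerivAt_iterDW (orbSmooth hT z) n ht

lemma continuousOn_dd (hT : IsHoloSG T) (z : X →L[ℂ] ℂ) (n : ℕ) :
    ContinuousOn (dualDeriv T n z) (Set.Ioi 0) :=
  (orbSmooth hT z).continuousOn_iteratedDerivWithin (natlt n).le udo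

end SG17
section Part2
open Filter Topology Set
namespace SG17
variable {X : Type*} [NormedAddCommGroup X] [NormedSpace ℂ X] [CompleteSpace X]
variable {T : ℝ → X →L[ℂ] X}

lemma hasDerivAt_shift {F : Type*} [NormedAddCommGroup F] [NormedSpace ℝ F]
    {f : ℝ → F} {f' : F} {s t : ℝ} (h : HasDerivAt f f' (t + s)) :
    HasDerivAt (fun u => f (u + s)) f' t := by
  have h2 := h.scomp (h := fun u => u + s) t ((hasDerivAt_id t).add_const s)
  simpa [Function.comp_def] using h2

lemma eq_derivs {F : Type*} [NormedAddCommGroup F] [NormedSpace ℝ F]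
    {f g f' g' : ℝ → F}
    (hf : ∀ u ∈ Set.Ioi (0:ℝ), HasDerivAt f (f' u) u)
    (hg : ∀ u ∈ Set.Ioi (0:ℝ), HasDerivAt g (g' u) u)
    (hfg : Set.EqOn f g (Set.Ioi 0)) : Set.EqOn f' g' (Set.Ioi 0) := by
  intro t ht
  have he : g =ᶠ[𝓝 t] f := Filter.eventuallyEq_of_mem (Ioi_mem_nhds ht) fun u hu => (hfg hu).symm
  exact ((hf t ht).congr_of_eventuallyEq he).unique (hg t ht)

/-- `A^n T_{t+s} = T_s ∘ A^n T_t`. -/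
lemma iter_shift (hT : IsHoloSG T) (n : ℕ) :
    ∀ s t : ℝ, 0 < s → 0 < t → iteratedDerivWithin n T (Set.Ioi 0) (t + s)
      = (T s).comp (iteratedDerivWithin n T (Set.Ioi 0) t) := by
  induction n with
  | zero =>
    intro s t hs ht
    simp only [iteratedDerivWithin_zero]
    rw [add_comm]; exact hT.semigroup s t hs ht
  | succ n IH =>
    intro s t hs ht
    have hf : ∀ u ∈ Set.Ioi (0:ℝ), HasDerivAt
        (fun u => iteratedDerivWithin n T (Set.Ioi 0) (u + s))
        (iteratedDerivWithin (n+1) T (Set.Ioi 0) (u + s)) u := fun u hu =>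
      hasDerivAt_shift (hasDerivAt_iterDW hT.smooth n (add_pos hu hs))
    have hg : ∀ u ∈ Set.Ioi (0:ℝ), HasDerivAt
        (fun u => ((ContinuousLinearMap.compL ℂ X X X (T s)).restrictScalars ℝ)
          (iteratedDerivWithin n T (Set.Ioi 0) u))
        (((ContinuousLinearMap.compL ℂ X X X (T s)).restrictScalars ℝ)
          (iteratedDerivWithin (n+1) T (Set.Ioi 0) u)) u := fun u hu =>
      (((ContinuousLinearMap.compL ℂ X X X (T s)).restrictScalars
        ℝ).hasFDerivAt).comp_hasDerivAt u (hasDerivAt_iterDW hT.smooth n hu)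
    have heq := eq_derivs hf hg (fun u hu => IH s u hs hu)
    exact heq ht

/-- `A^{n+k} T_{t+s} = A^n T_t ∘ A^k T_s`. -/
lemma iter_split (hT : IsHoloSG T) (n k : ℕ) :
    ∀ s t : ℝ, 0 < s → 0 < t → iteratedDerivWithin (n + k) T (Set.Ioi 0) (t + s)
      = (iteratedDerivWithin n T (Set.Ioi 0) t).comp (iteratedDerivWithin k T (Set.Ioi 0) s) := by
  induction k with
  | zero =>
    intro s t hs ht
    simp only [Nat.add_zero, iteratedDerivWithin_zero]
    exact hT.derivComp n s t hs ht
  | succ k IH =>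
    intro s t hs ht
    have hf : ∀ u ∈ Set.Ioi (0:ℝ), HasDerivAt
        (fun u => iteratedDerivWithin (n + k) T (Set.Ioi 0) (t + u))
        (iteratedDerivWithin (n + k + 1) T (Set.Ioi 0) (t + u)) u := by
      intro u hu
      have h := hasDerivAt_iterDW hT.smooth (n+k) (add_pos hu ht)
      have h2 := hasDerivAt_shift (f := iteratedDerivWithin (n+k) T (Set.Ioi 0)) (s := t)
        (t := u) (by rwa [add_comm u t] at h ⊢)
      simpa [add_comm] using h2
    have hg : ∀ u ∈ Set.Ioi (0:ℝ), HasDerivAt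
        (fun u => ((ContinuousLinearMap.compL ℂ X X X
            (iteratedDerivWithin n T (Set.Ioi 0) t)).restrictScalars ℝ)
          (iteratedDerivWithin k T (Set.Ioi 0) u))
        (((ContinuousLinearMap.compL ℂ X X X
            (iteratedDerivWithin n T (Set.Ioi 0) t)).restrictScalars ℝ)
          (iteratedDerivWithin (k+1) T (Set.Ioi 0) u)) u := fun u hu =>
      (((ContinuousLinearMap.compL ℂ X X X _).restrictScalars
        ℝ).hasFDerivAt).comp_hasDerivAt u (hasDerivAt_iterDW hT.smooth k hu)
    have heq := eq_derivs hf hg (fun u hu => IH u t hu ht)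
    have h3 := heq hs
    simpa [Nat.add_assoc] using h3

lemma dd_shift (hT : IsHoloSG T) (z : X →L[ℂ] ℂ) (k : ℕ) {s t : ℝ} (hs : 0 < s) (ht : 0 < t) :
    dualDeriv T k (z.comp (T s)) t = dualDeriv T k z (t + s) := by
  rw [dualDeriv_eq hT _ k ht, dualDeriv_eq hT z k (mem_Ioi.mpr (add_pos ht hs)),
    iter_shift hT k s t hs ht]
  rfl

lemma dd_split (hT : IsHoloSG T) (z : X →L[ℂ] ℂ) (n k : ℕ) {s t : ℝ}
    (hs : 0 < s) (ht : 0 < t) :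
    dualDeriv T (n + k) z (t + s)
      = (dualDeriv T n z t).comp (iteratedDerivWithin k T (Set.Ioi 0) s) := by
  rw [dualDeriv_eq hT z (n+k) (mem_Ioi.mpr (add_pos ht hs)),
    dualDeriv_eq hT z n ht, iter_split hT n k s t hs ht]
  rfl

end SG17
end Part2
section Part3
open Filter Topology Set MeasureTheory intervalIntegral
namespace SG17
variable {X : Type*} [NormedAddCommGroup X] [NormedSpace ℂ X] [CompleteSpace X]
variable {T : ℝ → X →L[ℂ] X}

instance : Nonempty (Set.Ioi (0:ℝ)) := ⟨⟨1, mem_Ioi.mpr one_pos⟩⟩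

lemma dd_sub (hT : IsHoloSG T) (z w : X →L[ℂ] ℂ) (n : ℕ) {t : ℝ} (ht : 0 < t) :
    dualDeriv T n (z - w) t = dualDeriv T n z t - dualDeriv T n w t := by
  have hfun : (fun u => (z - w).comp (T u))
      = (fun u => z.comp (T u)) - (fun u => w.comp (T u)) := by
    funext u; simp [ContinuousLinearMap.sub_comp]
  rw [dualDeriv, hfun]
  exact iteratedDerivWithin_sub ht udo
    ((orbSmooth hT z).of_le (natlt n).le t ht) ((orbSmooth hT w).of_le (natlt n).le t ht)

lemma dd_add (hT : IsHoloSG T) (z w : X →L[ℂ] ℂ) (n : ℕ) {t : ℝ} (ht : 0 < t) :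
    dualDeriv T n (z + w) t = dualDeriv T n z t + dualDeriv T n w t := by
  have hfun : (fun u => (z + w).comp (T u))
      = (fun u => z.comp (T u)) + (fun u => w.comp (T u)) := by
    funext u; simp [ContinuousLinearMap.add_comp]
  rw [dualDeriv, hfun]
  exact iteratedDerivWithin_add ht udo
    ((orbSmooth hT z).of_le (natlt n).le t ht) ((orbSmooth hT w).of_le (natlt n).le t ht)

lemma dd_zero' (n : ℕ) {t : ℝ} (ht : 0 < t) :
    dualDeriv T n (0 : X →L[ℂ] ℂ) t = 0 := by
  have hfun : (fun u => (0 : X →L[ℂ] ℂ).comp (T u))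
      = (fun _ : ℝ => (0 : X →L[ℂ] ℂ)) := by funext u; simp
  rw [dualDeriv, hfun, iteratedDerivWithin_eq_iteratedFDerivWithin,
    iteratedFDerivWithin_zero_fun]
  simp

lemma norm_dd0_le (hT : IsHoloSG T) (z : X →L[ℂ] ℂ) {M : ℝ}
    (hM : ∀ t : ℝ, 0 < t → ‖T t‖ ≤ M) {t : ℝ} (ht : 0 < t) :
    ‖dualDeriv T 0 z t‖ ≤ M * ‖z‖ := by
  have : dualDeriv T 0 z t = z.comp (T t) := by rw [dualDeriv, iteratedDerivWithin_zero]
  rw [this]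
  calc ‖z.comp (T t)‖ ≤ ‖z‖ * ‖T t‖ := ContinuousLinearMap.opNorm_comp_le _ _
    _ ≤ ‖z‖ * M := by have := hM t ht; nlinarith [norm_nonneg z, norm_nonneg (T t)]
    _ = M * ‖z‖ := mul_comm _ _

lemma norm_dd_le (hT : IsHoloSG T) (z : X →L[ℂ] ℂ) {n : ℕ} (hn : 1 ≤ n) {Cb : ℝ}
    (hC : ∀ n : ℕ, 1 ≤ n → ∀ t : ℝ, 0 < t →
      ‖iteratedDerivWithin n T (Set.Ioi 0) t‖ ≤ Cb ^ n / t ^ n)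
    {t : ℝ} (ht : 0 < t) :
    ‖dualDeriv T n z t‖ ≤ ‖z‖ * (Cb ^ n / t ^ n) := by
  rw [dualDeriv_eq hT z n ht]
  calc ‖z.comp _‖ ≤ ‖z‖ * ‖iteratedDerivWithin n T (Set.Ioi 0) t‖ :=
      ContinuousLinearMap.opNorm_comp_le _ _
    _ ≤ ‖z‖ * (Cb ^ n / t ^ n) := by
      have := hC n hn t ht
      have h0 := norm_nonneg z
      nlinarith [norm_nonneg (iteratedDerivWithin n T (Set.Ioi 0) t)]

lemma tendsto_dd_atTop (hT : IsHoloSG T) (z : X →L[ℂ] ℂ) {n : ℕ} (hn : 1 ≤ n) {Cb : ℝ}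
    (hC : ∀ n : ℕ, 1 ≤ n → ∀ t : ℝ, 0 < t →
      ‖iteratedDerivWithin n T (Set.Ioi 0) t‖ ≤ Cb ^ n / t ^ n) :
    Tendsto (fun R => ‖dualDeriv T n z R‖) atTop (𝓝 0) := by
  apply squeeze_zero' (Filter.Eventually.of_forall fun R => norm_nonneg _)
  · filter_upwards [Filter.eventually_gt_atTop (0:ℝ)] with R hR
    exact norm_dd_le hT z hn hC hR
  · have h1 : Tendsto (fun R : ℝ => R ^ n) atTop atTop :=
      tendsto_pow_atTop (by omega : n ≠ 0)
    have := Filter.Tendsto.div_atTop (f := fun _ : ℝ => ‖z‖ * Cb ^ n)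
      tendsto_const_nhds h1
    simpa [mul_div_assoc] using this

lemma diff_le_integral {F : Type*} [NormedAddCommGroup F] [NormedSpace ℝ F] [CompleteSpace F]
    {g g' : ℝ → F} (hd : ∀ u ∈ Set.Ioi (0:ℝ), HasDerivAt g (g' u) u)
    (hc : ContinuousOn g' (Set.Ioi 0)) {a b : ℝ} (ha : 0 < a) (hab : a ≤ b) :
    ‖g b - g a‖ ≤ ∫ u in a..b, ‖g' u‖ := by
  have hIcc : uIcc a b = Icc a b := uIcc_of_le hab
  have hsub : Icc a b ⊆ Set.Ioi 0 := fun u hu => lt_of_lt_of_le ha hu.1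
  have hint : IntervalIntegrable g' volume a b :=
    ((hc.mono hsub).mono (by rw [hIcc] : uIcc a b ⊆ Icc a b)).intervalIntegrable
  have hftc : ∫ u in a..b, g' u = g b - g a :=
    integral_eq_sub_of_hasDerivAt (fun x hx => hd x (hsub (hIcc ▸ hx))) hint
  rw [← hftc]
  exact intervalIntegral.norm_integral_le_integral_norm hab

lemma integrable_rpow_on {a b c e : ℝ} (ha : 0 < a) (hab : a ≤ b) :
    IntervalIntegrable (fun u : ℝ => c * u ^ e) volume a b := by
  apply ContinuousOn.intervalIntegrable
  apply ContinuousOn.mul continuousOn_const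
  apply ContinuousOn.rpow_const continuousOn_id
  intro x hx
  rw [uIcc_of_le hab] at hx
  exact Or.inl (ne_of_gt (lt_of_lt_of_le ha hx.1))

lemma diff_le_rpow {F : Type*} [NormedAddCommGroup F] [NormedSpace ℝ F] [CompleteSpace F]
    {g g' : ℝ → F} (hd : ∀ u ∈ Set.Ioi (0:ℝ), HasDerivAt g (g' u) u)
    (hc : ContinuousOn g' (Set.Ioi 0)) {a b c e : ℝ} (ha : 0 < a) (hab : a ≤ b)
    (hb : ∀ u ∈ Icc a b, ‖g' u‖ ≤ c * u ^ e) (he : e ≠ -1) :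
    ‖g b - g a‖ ≤ c * ((b ^ (e+1) - a ^ (e+1)) / (e+1)) := by
  have hIcc : uIcc a b = Icc a b := uIcc_of_le hab
  have hsub : Icc a b ⊆ Set.Ioi 0 := fun u hu => lt_of_lt_of_le ha hu.1
  have hint : IntervalIntegrable (fun u => ‖g' u‖) volume a b :=
    (((hc.mono hsub).mono (by rw [hIcc] : uIcc a b ⊆ Icc a b)).norm).intervalIntegrable
  calc ‖g b - g a‖ ≤ ∫ u in a..b, ‖g' u‖ := diff_le_integral hd hc ha hab
    _ ≤ ∫ u in a..b, c * u ^ e :=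
      intervalIntegral.integral_mono_on hab hint (integrable_rpow_on ha hab) hb
    _ = c * ∫ u in a..b, u ^ e := by rw [intervalIntegral.integral_const_mul]
    _ = c * ((b ^ (e+1) - a ^ (e+1)) / (e+1)) := by
      rw [integral_rpow (Or.inr ⟨he, by
        rw [hIcc]; intro h0; exact absurd h0.1 (not_le.mpr ha)⟩)]

lemma diff_le_const {F : Type*} [NormedAddCommGroup F] [NormedSpace ℝ F] [CompleteSpace F]
    {g g' : ℝ → F} (hd : ∀ u ∈ Set.Ioi (0:ℝ), HasDerivAt g (g' u) u)
    (hc : ContinuousOn g' (Set.Ioi 0)) {a b B : ℝ} (ha : 0 < a) (hab : a ≤ b)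
    (hB : ∀ u ∈ Icc a b, ‖g' u‖ ≤ B) :
    ‖g b - g a‖ ≤ (b - a) * B := by
  have hIcc : uIcc a b = Icc a b := uIcc_of_le hab
  have hsub : Icc a b ⊆ Set.Ioi 0 := fun u hu => lt_of_lt_of_le ha hu.1
  have hint : IntervalIntegrable g' volume a b :=
    ((hc.mono hsub).mono (by rw [hIcc] : uIcc a b ⊆ Icc a b)).intervalIntegrable
  have hftc : ∫ u in a..b, g' u = g b - g a :=
    integral_eq_sub_of_hasDerivAt (fun x hx => hd x (hsub (hIcc ▸ hx))) hint
  rw [← hftc]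
  have h := intervalIntegral.norm_integral_le_of_norm_le_const (C := B)
    (f := g') (a := a) (b := b) (fun x hx => hB x (by
      rcases hx with ⟨h1, h2⟩
      rw [min_eq_left hab] at h1
      rw [max_eq_right hab] at h2
      exact ⟨le_of_lt h1, h2⟩))
  calc ‖∫ u in a..b, g' u‖ ≤ B * |b - a| := h
    _ = (b - a) * B := by rw [abs_of_nonneg (by linarith), mul_comm]

end SG17
end Part3
section Part4
open Filter Topology Set MeasureTheory
namespace SG17
variable {X : Type*} [NormedAddCommGroup X] [NormedSpace ℂ X] [CompleteSpace X]
variable {T : ℝ → X →L[ℂ] X}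

/-- the sup part of the Λ norm -/
def lsup (T : ℝ → X →L[ℂ] X) (β : ℝ) (z : X →L[ℂ] ℂ) : ℝ :=
  ⨆ t : Set.Ioi (0:ℝ), (t : ℝ) ^ ((mExp β : ℝ) - β) * ‖dualDeriv T (mExp β) z t‖

lemma lambdaNorm_eq (β : ℝ) (z : X →L[ℂ] ℂ) :
    lambdaNorm T β z = ‖z‖ + lsup T β z := rfl

lemma lsup_nonneg (β : ℝ) (z : X →L[ℂ] ℂ) : 0 ≤ lsup T β z :=
  Real.iSup_nonneg fun t => mul_nonneg (Real.rpow_nonneg (le_of_lt t.2) _) (norm_nonneg _)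

lemma lambdaNorm_nonneg (β : ℝ) (z : X →L[ℂ] ℂ) : 0 ≤ lambdaNorm T β z :=
  add_nonneg (norm_nonneg _) (lsup_nonneg β z)

lemma norm_le_lambdaNorm (β : ℝ) (z : X →L[ℂ] ℂ) : ‖z‖ ≤ lambdaNorm T β z :=
  le_add_of_nonneg_right (lsup_nonneg β z)

lemma lsup_le_lambdaNorm (β : ℝ) (z : X →L[ℂ] ℂ) : lsup T β z ≤ lambdaNorm T β z :=
  le_add_of_nonneg_left (norm_nonneg _)

lemma rpow_cancel {t : ℝ} (ht : 0 < t) (a : ℝ) : t ^ a * t ^ (-a) = 1 := by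
  rw [← Real.rpow_add ht, add_neg_cancel, Real.rpow_zero]

lemma lsup_le {β B : ℝ} {z : X →L[ℂ] ℂ}
    (hB : ∀ t : ℝ, 0 < t → (t : ℝ) ^ ((mExp β : ℝ) - β) * ‖dualDeriv T (mExp β) z t‖ ≤ B) :
    lsup T β z ≤ B :=
  ciSup_le fun t => hB t t.2

lemma lsup_le' {β c : ℝ} {z : X →L[ℂ] ℂ}
    (h : ∀ t : ℝ, 0 < t → ‖dualDeriv T (mExp β) z t‖ ≤ c * t ^ (β - (mExp β : ℝ))) :
    lsup T β z ≤ c := by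
  apply lsup_le
  intro t ht
  calc t ^ ((mExp β : ℝ) - β) * ‖dualDeriv T (mExp β) z t‖
      ≤ t ^ ((mExp β : ℝ) - β) * (c * t ^ (β - (mExp β : ℝ))) := by
        exact mul_le_mul_of_nonneg_left (h t ht) (by positivity)
    _ = c * (t ^ ((mExp β : ℝ) - β) * t ^ (-((mExp β : ℝ) - β))) := by ring_nf
    _ = c := by rw [rpow_cancel ht]; ring

lemma memLambda_of {β c : ℝ} {z : X →L[ℂ] ℂ}
    (h : ∀ t : ℝ, 0 < t → ‖dualDeriv T (mExp β) z t‖ ≤ c * t ^ (β - (mExp β : ℝ))) :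
    MemLambda T β z := ⟨c, h⟩

lemma dd_le_lsup {β : ℝ} {z : X →L[ℂ] ℂ} (h : MemLambda T β z) :
    ∀ t : ℝ, 0 < t → ‖dualDeriv T (mExp β) z t‖ ≤ lsup T β z * t ^ (β - (mExp β : ℝ)) := by
  obtain ⟨C, hC⟩ := h
  have hbdd : BddAbove (Set.range fun t : Set.Ioi (0:ℝ) =>
      (t : ℝ) ^ ((mExp β : ℝ) - β) * ‖dualDeriv T (mExp β) z t‖) := by
    refine ⟨max C 0, ?_⟩
    rintro v ⟨⟨t, ht⟩, rfl⟩
    simp only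
    calc (t : ℝ) ^ ((mExp β : ℝ) - β) * ‖dualDeriv T (mExp β) z t‖
        ≤ t ^ ((mExp β : ℝ) - β) * (C * t ^ (β - (mExp β : ℝ))) :=
          mul_le_mul_of_nonneg_left (hC t ht) (Real.rpow_nonneg (le_of_lt ht) _)
      _ = C * (t ^ ((mExp β : ℝ) - β) * t ^ (-((mExp β : ℝ) - β))) := by ring_nf
      _ = C := by rw [rpow_cancel ht]; ring
      _ ≤ max C 0 := le_max_left _ _
  intro t ht
  have hle : (t : ℝ) ^ ((mExp β : ℝ) - β) * ‖dualDeriv T (mExp β) z t‖ ≤ lsup T β z :=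
    le_ciSup hbdd ⟨t, ht⟩
  calc ‖dualDeriv T (mExp β) z t‖
      = (t ^ (β - (mExp β:ℝ)) * t ^ ((mExp β:ℝ) - β)) * ‖dualDeriv T (mExp β) z t‖ := by
        rw [← Real.rpow_add ht]; simp
    _ = t ^ (β - (mExp β:ℝ)) * (t ^ ((mExp β:ℝ) - β) * ‖dualDeriv T (mExp β) z t‖) := by ring
    _ ≤ t ^ (β - (mExp β:ℝ)) * lsup T β z := mul_le_mul_of_nonneg_left hle (by positivity)
    _ = lsup T β z * t ^ (β - (mExp β:ℝ)) := mul_comm _ _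

lemma memLambda_zero (β : ℝ) : MemLambda T β (0 : X →L[ℂ] ℂ) :=
  ⟨0, fun t ht => by rw [dd_zero' _ ht]; simp⟩

lemma lambdaNorm_zero (β : ℝ) : lambdaNorm T β (0 : X →L[ℂ] ℂ) = 0 := by
  rw [lambdaNorm_eq]
  have : lsup T β (0 : X →L[ℂ] ℂ) = 0 := by
    have h : (fun t : Set.Ioi (0:ℝ) =>
        (t : ℝ) ^ ((mExp β : ℝ) - β) * ‖dualDeriv T (mExp β) (0 : X →L[ℂ] ℂ) t‖)
        = fun _ => (0:ℝ) := by
      funext t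
      rw [dd_zero' _ t.2]
      simp
    rw [lsup, h, ciSup_const]
  rw [this]
  simp

lemma Kfun_bddBelow (β₀ β₁ t : ℝ) (ht : 0 ≤ t) (xs : X →L[ℂ] ℂ) :
    BddBelow {v : ℝ | ∃ x0 x1 : X →L[ℂ] ℂ, MemLambda T β₀ x0 ∧ MemLambda T β₁ x1 ∧
      xs = x0 + x1 ∧ v = lambdaNorm T β₀ x0 + t * lambdaNorm T β₁ x1} := by
  refine ⟨0, ?_⟩
  rintro v ⟨x0, x1, _, _, _, rfl⟩
  have := lambdaNorm_nonneg (T := T) β₀ x0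
  have := lambdaNorm_nonneg (T := T) β₁ x1
  nlinarith

lemma Kfun_nonneg (β₀ β₁ t : ℝ) (ht : 0 ≤ t) (xs : X →L[ℂ] ℂ) :
    0 ≤ Kfun T β₀ β₁ t xs := by
  apply Real.sInf_nonneg
  rintro v ⟨x0, x1, _, _, _, rfl⟩
  have := lambdaNorm_nonneg (T := T) β₀ x0
  have := lambdaNorm_nonneg (T := T) β₁ x1
  nlinarith

lemma Kfun_le {β₀ β₁ t : ℝ} (ht : 0 ≤ t) {xs x0 x1 : X →L[ℂ] ℂ}
    (h0 : MemLambda T β₀ x0) (h1 : MemLambda T β₁ x1) (hx : xs = x0 + x1) :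
    Kfun T β₀ β₁ t xs ≤ lambdaNorm T β₀ x0 + t * lambdaNorm T β₁ x1 :=
  csInf_le (Kfun_bddBelow β₀ β₁ t ht xs) ⟨x0, x1, h0, h1, hx, rfl⟩

lemma le_Kfun {β₀ β₁ t b : ℝ} {xs : X →L[ℂ] ℂ} (hne : MemLambda T β₀ xs)
    (h : ∀ x0 x1 : X →L[ℂ] ℂ, MemLambda T β₀ x0 → MemLambda T β₁ x1 → xs = x0 + x1 →
      b ≤ lambdaNorm T β₀ x0 + t * lambdaNorm T β₁ x1) :
    b ≤ Kfun T β₀ β₁ t xs := by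
  apply le_csInf
  · exact ⟨lambdaNorm T β₀ xs + t * lambdaNorm T β₁ 0,
      xs, 0, hne, memLambda_zero β₁, by simp, rfl⟩
  · rintro v ⟨x0, x1, h0, h1, hx, rfl⟩
    exact h x0 x1 h0 h1 hx

end SG17
end Part4
section Part5
open Filter Topology Set MeasureTheory
namespace SG17
variable {X : Type*} [NormedAddCommGroup X] [NormedSpace ℂ X] [CompleteSpace X]
variable {T : ℝ → X →L[ℂ] X}

/-- Splitting bound: a bound `c u^(γ-k₀)` on the `k₀`-th derivative propagates to
higher derivatives. -/
lemma dd_high (hT : IsHoloSG T) {Cb : ℝ} (hCb : 0 < Cb)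
    (hC : ∀ n : ℕ, 1 ≤ n → ∀ t : ℝ, 0 < t →
      ‖iteratedDerivWithin n T (Set.Ioi 0) t‖ ≤ Cb ^ n / t ^ n)
    (z : X →L[ℂ] ℂ) {k₀ k : ℕ} (hkk : k₀ ≤ k) {γ c : ℝ} (hγ : γ ≤ k₀) (hc0 : 0 ≤ c)
    (hb : ∀ u : ℝ, 0 < u → ‖dualDeriv T k₀ z u‖ ≤ c * u ^ (γ - (k₀:ℝ))) :
    ∀ u : ℝ, 0 < u →
      ‖dualDeriv T k z u‖ ≤ c * (Cb ^ (k - k₀) * 2 ^ ((k:ℝ) - γ)) * u ^ (γ - (k:ℝ)) := by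
  intro u hu
  have h2γ : (1:ℝ) ≤ 2 ^ ((k:ℝ) - γ) := by
    have : ((2:ℝ)) ^ (0:ℝ) ≤ 2 ^ ((k:ℝ) - γ) := by
      apply Real.rpow_le_rpow_of_exponent_le one_le_two
      have : γ ≤ (k:ℝ) := le_trans hγ (by exact_mod_cast hkk)
      linarith
    rwa [Real.rpow_zero] at this
  rcases Nat.eq_or_lt_of_le hkk with heq | hlt
  · subst heq
    calc ‖dualDeriv T k₀ z u‖ ≤ c * u ^ (γ - (k₀:ℝ)) := hb u hu
      _ ≤ c * (Cb ^ (k₀ - k₀) * 2 ^ ((k₀:ℝ) - γ)) * u ^ (γ - (k₀:ℝ)) := by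
        have hu0 : (0:ℝ) ≤ u ^ (γ - (k₀:ℝ)) := Real.rpow_nonneg hu.le _
        have h1 : (1:ℝ) ≤ Cb ^ (k₀ - k₀) * 2 ^ ((k₀:ℝ) - γ) := by
          simp only [Nat.sub_self, pow_zero, one_mul]; exact h2γ
        exact mul_le_mul_of_nonneg_right (le_mul_of_one_le_right hc0 h1) hu0
  · set j := k - k₀ with hj
    have hj1 : 1 ≤ j := by omega
    have hkj : k = k₀ + j := by omega
    have hu2 : 0 < u / 2 := by linarith
    have hsplit : dualDeriv T k z u
        = (dualDeriv T k₀ z (u/2)).comp (iteratedDerivWithin j T (Set.Ioi 0) (u/2)) := by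
      have := dd_split hT z k₀ j (s := u/2) (t := u/2) hu2 hu2
      rw [hkj]
      rw [← this]
      norm_num
    rw [hsplit]
    have h1 : ‖dualDeriv T k₀ z (u/2)‖ ≤ c * (u/2) ^ (γ - (k₀:ℝ)) := hb _ hu2
    have h2 : ‖iteratedDerivWithin j T (Set.Ioi 0) (u/2)‖ ≤ Cb ^ j / (u/2) ^ j :=
      hC j hj1 _ hu2
    calc ‖(dualDeriv T k₀ z (u/2)).comp (iteratedDerivWithin j T (Set.Ioi 0) (u/2))‖
        ≤ ‖dualDeriv T k₀ z (u/2)‖ * ‖iteratedDerivWithin j T (Set.Ioi 0) (u/2)‖ :=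
          ContinuousLinearMap.opNorm_comp_le _ _
      _ ≤ (c * (u/2) ^ (γ - (k₀:ℝ))) * (Cb ^ j / (u/2) ^ j) := by
          apply mul_le_mul h1 h2 (norm_nonneg _)
          positivity
      _ = c * Cb ^ j * ((u/2) ^ (γ - (k₀:ℝ)) * ((u/2) ^ (j:ℝ))⁻¹) := by
          rw [← Real.rpow_natCast (u/2) j]
          ring
      _ = c * Cb ^ j * (u/2) ^ (γ - (k:ℝ)) := by
          rw [← Real.rpow_neg hu2.le, ← Real.rpow_add hu2]
          congr 2
          rw [hkj]
          push_cast
          ring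
      _ = c * Cb ^ j * (u ^ (γ - (k:ℝ)) * (2:ℝ) ^ ((k:ℝ) - γ)) := by
          rw [Real.div_rpow hu.le (by norm_num : (0:ℝ) ≤ 2), div_eq_mul_inv,
            ← Real.rpow_neg (by norm_num : (0:ℝ) ≤ 2)]
          congr 2
          ring
      _ = c * (Cb ^ j * 2 ^ ((k:ℝ) - γ)) * u ^ (γ - (k:ℝ)) := by ring

/-- Downward integration from infinity. -/
lemma dd_down_infty (hT : IsHoloSG T) {Cb : ℝ}
    (hC : ∀ n : ℕ, 1 ≤ n → ∀ t : ℝ, 0 < t →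
      ‖iteratedDerivWithin n T (Set.Ioi 0) t‖ ≤ Cb ^ n / t ^ n)
    (z : X →L[ℂ] ℂ) {k : ℕ} (hk : 1 ≤ k) {γ c : ℝ} (hγ : γ < k) (hc0 : 0 ≤ c)
    (hb : ∀ u : ℝ, 0 < u → ‖dualDeriv T (k+1) z u‖ ≤ c * u ^ (γ - ((k:ℝ)+1))) :
    ∀ t : ℝ, 0 < t → ‖dualDeriv T k z t‖ ≤ (c / ((k:ℝ) - γ)) * t ^ (γ - (k:ℝ)) := by
  intro t ht
  set A := (c / ((k:ℝ) - γ)) * t ^ (γ - (k:ℝ)) with hA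
  have hA0 : 0 ≤ A := by
    apply mul_nonneg (div_nonneg hc0 (by linarith)) (Real.rpow_nonneg ht.le _)
  have key : ∀ R, t ≤ R → ‖dualDeriv T k z t‖ ≤ ‖dualDeriv T k z R‖ + A := by
    intro R hR
    have hdiff : ‖dualDeriv T k z R - dualDeriv T k z t‖
        ≤ c * ((R ^ ((γ - ((k:ℝ)+1))+1) - t ^ ((γ - ((k:ℝ)+1))+1)) / ((γ - ((k:ℝ)+1))+1)) := by
      apply diff_le_rpow (fun u hu => hasDerivAt_dd hT z k hu)
        (continuousOn_dd hT z (k+1)) ht hR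
        (fun u hu => hb u (lt_of_lt_of_le ht hu.1))
      intro hcon
      have : γ = (k:ℝ) := by linarith [hcon]
      linarith
    have he1 : (γ - ((k:ℝ)+1)) + 1 = γ - k := by ring
    rw [he1] at hdiff
    have hRk : (0:ℝ) ≤ R ^ (γ - (k:ℝ)) := Real.rpow_nonneg (by linarith) _
    have hkγ : 0 < (k:ℝ) - γ := by linarith
    have hdiff2 : ‖dualDeriv T k z R - dualDeriv T k z t‖ ≤ A := by
      rw [hA]
      have heq2 : (R ^ (γ-(k:ℝ)) - t ^ (γ-(k:ℝ))) / (γ - (k:ℝ))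
          = (t ^ (γ-(k:ℝ)) - R ^ (γ-(k:ℝ))) / ((k:ℝ) - γ) := by
        rw [div_eq_div_iff (by linarith) (by linarith)]
        ring
      calc ‖dualDeriv T k z R - dualDeriv T k z t‖
          ≤ c * ((R ^ (γ-(k:ℝ)) - t ^ (γ-(k:ℝ))) / (γ - (k:ℝ))) := hdiff
        _ = c * ((t ^ (γ-(k:ℝ)) - R ^ (γ-(k:ℝ))) / ((k:ℝ) - γ)) := by rw [heq2]
        _ ≤ c * (t ^ (γ-(k:ℝ)) / ((k:ℝ) - γ)) := by
            apply mul_le_mul_of_nonneg_left _ hc0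
            gcongr
            linarith
        _ = (c / ((k:ℝ) - γ)) * t ^ (γ - (k:ℝ)) := by ring
    have h3 : dualDeriv T k z t
        = dualDeriv T k z R - (dualDeriv T k z R - dualDeriv T k z t) := by abel
    calc ‖dualDeriv T k z t‖
        = ‖dualDeriv T k z R - (dualDeriv T k z R - dualDeriv T k z t)‖ := by rw [← h3]
      _ ≤ ‖dualDeriv T k z R‖ + ‖dualDeriv T k z R - dualDeriv T k z t‖ := norm_sub_le _ _
      _ ≤ ‖dualDeriv T k z R‖ + A := by linarith [hdiff2]
  have hlim : Tendsto (fun R => ‖dualDeriv T k z R‖ + A) atTop (𝓝 (0 + A)) :=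
    (tendsto_dd_atTop hT z hk hC).add tendsto_const_nhds
  have : ‖dualDeriv T k z t‖ ≤ 0 + A := by
    apply ge_of_tendsto hlim
    filter_upwards [Filter.eventually_ge_atTop t] with R hR
    exact key R hR
  linarith

end SG17
end Part5
section Part6
open Filter Topology Set MeasureTheory
namespace SG17
variable {X : Type*} [NormedAddCommGroup X] [NormedSpace ℂ X] [CompleteSpace X]
variable {T : ℝ → X →L[ℂ] X}

/-- Downward integration with endpoint 1. -/
lemma dd_down_one (hT : IsHoloSG T) (z : X →L[ℂ] ℂ) {k : ℕ} {γ c : ℝ}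
    (hγ : γ < k) (hc0 : 0 ≤ c)
    (hb : ∀ u : ℝ, 0 < u → u ≤ 1 → ‖dualDeriv T (k+1) z u‖ ≤ c * u ^ (γ - ((k:ℝ)+1))) :
    ∀ t : ℝ, 0 < t → t ≤ 1 →
      ‖dualDeriv T k z t‖ ≤ ‖dualDeriv T k z 1‖ + (c / ((k:ℝ) - γ)) * t ^ (γ - (k:ℝ)) := by
  intro t ht ht1
  have hkγ : 0 < (k:ℝ) - γ := by linarith
  have hdiff : ‖dualDeriv T k z 1 - dualDeriv T k z t‖
      ≤ c * (((1:ℝ) ^ ((γ - ((k:ℝ)+1))+1) - t ^ ((γ - ((k:ℝ)+1))+1)) / ((γ - ((k:ℝ)+1))+1)) := by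
    apply diff_le_rpow (fun u hu => hasDerivAt_dd hT z k hu)
      (continuousOn_dd hT z (k+1)) ht ht1
      (fun u hu => hb u (lt_of_lt_of_le ht hu.1) hu.2)
    intro hcon
    have : γ = (k:ℝ) := by linarith [hcon]
    linarith
  have he1 : (γ - ((k:ℝ)+1)) + 1 = γ - k := by ring
  rw [he1] at hdiff
  have h1r : (1:ℝ) ^ (γ - (k:ℝ)) = 1 := Real.one_rpow _
  rw [h1r] at hdiff
  have hdiff2 : ‖dualDeriv T k z 1 - dualDeriv T k z t‖
      ≤ (c / ((k:ℝ) - γ)) * t ^ (γ - (k:ℝ)) := by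
    have heq2 : ((1:ℝ) - t ^ (γ-(k:ℝ))) / (γ - (k:ℝ))
        = (t ^ (γ-(k:ℝ)) - 1) / ((k:ℝ) - γ) := by
      rw [div_eq_div_iff (by linarith) (by linarith)]
      ring
    calc ‖dualDeriv T k z 1 - dualDeriv T k z t‖
        ≤ c * (((1:ℝ) - t ^ (γ-(k:ℝ))) / (γ - (k:ℝ))) := hdiff
      _ = c * ((t ^ (γ-(k:ℝ)) - 1) / ((k:ℝ) - γ)) := by rw [heq2]
      _ ≤ c * (t ^ (γ-(k:ℝ)) / ((k:ℝ) - γ)) := by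
          apply mul_le_mul_of_nonneg_left _ hc0
          gcongr
          linarith
      _ = (c / ((k:ℝ) - γ)) * t ^ (γ - (k:ℝ)) := by ring
  have h3 : dualDeriv T k z t
      = dualDeriv T k z 1 - (dualDeriv T k z 1 - dualDeriv T k z t) := by abel
  calc ‖dualDeriv T k z t‖
      = ‖dualDeriv T k z 1 - (dualDeriv T k z 1 - dualDeriv T k z t)‖ := by rw [← h3]
    _ ≤ ‖dualDeriv T k z 1‖ + ‖dualDeriv T k z 1 - dualDeriv T k z t‖ := norm_sub_le _ _
    _ ≤ ‖dualDeriv T k z 1‖ + (c / ((k:ℝ) - γ)) * t ^ (γ - (k:ℝ)) := by linarith [hdiff2]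

lemma dd_del (hT : IsHoloSG T) (z : X →L[ℂ] ℂ) (k : ℕ) {s t : ℝ} (hs : 0 < s) (ht : 0 < t) :
    dualDeriv T k (z - z.comp (T s)) t = dualDeriv T k z t - dualDeriv T k z (t + s) := by
  rw [dd_sub hT z (z.comp (T s)) k ht, dd_shift hT z k hs ht]

/-- `u^e ≤ 2^|e| t^e` for `t ≤ u ≤ 2t`. -/
lemma rpow_le_two_rpow {t u e : ℝ} (ht : 0 < t) (h1 : t ≤ u) (h2 : u ≤ 2*t) :
    u ^ e ≤ 2 ^ |e| * t ^ e := by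
  rcases le_or_gt 0 e with he | he
  · rw [abs_of_nonneg he]
    calc u ^ e ≤ (2*t) ^ e := Real.rpow_le_rpow (by linarith) h2 he
      _ = 2 ^ e * t ^ e := Real.mul_rpow (by norm_num) ht.le
  · rw [abs_of_neg he]
    have h3 : u ^ e ≤ t ^ e := Real.rpow_le_rpow_of_nonpos ht h1 he.le
    have h4 : (1:ℝ) ≤ 2 ^ (-e) := by
      have := Real.rpow_le_rpow_of_exponent_le (one_le_two : (1:ℝ) ≤ 2)
        (by linarith : (0:ℝ) ≤ -e)
      rwa [Real.rpow_zero] at this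
    have h5 : (0:ℝ) ≤ t ^ e := Real.rpow_nonneg ht.le _
    nlinarith

/-- the key elementary estimate `t^(m₁-β₁) (t+s)^(β-m₁) ≤ s^(β-β₁)`. -/
lemma pow_shift_le {t s β β₁ m₁ : ℝ} (ht : 0 < t) (hs : 0 < s)
    (hββ₁ : β ≤ β₁) (hβm : β ≤ m₁) (hβ₁m : β₁ ≤ m₁) :
    t ^ (m₁ - β₁) * (t+s) ^ (β - m₁) ≤ s ^ (β - β₁) := by
  rcases le_total t s with hts | hst
  · calc t ^ (m₁ - β₁) * (t+s) ^ (β - m₁)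
        ≤ s ^ (m₁ - β₁) * s ^ (β - m₁) := by
          apply mul_le_mul (Real.rpow_le_rpow ht.le hts (by linarith))
            (Real.rpow_le_rpow_of_nonpos hs (by linarith) (by linarith))
            (Real.rpow_nonneg (by linarith) _) (Real.rpow_nonneg hs.le _)
      _ = s ^ (β - β₁) := by rw [← Real.rpow_add hs]; ring_nf
  · calc t ^ (m₁ - β₁) * (t+s) ^ (β - m₁)
        ≤ t ^ (m₁ - β₁) * t ^ (β - m₁) := by
          apply mul_le_mul_of_nonneg_left
            (Real.rpow_le_rpow_of_nonpos ht (by linarith) (by linarith))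
            (Real.rpow_nonneg ht.le _)
      _ = t ^ (β - β₁) := by rw [← Real.rpow_add ht]; ring_nf
      _ ≤ s ^ (β - β₁) := Real.rpow_le_rpow_of_nonpos hs hst (by linarith)

/-- Q-step: difference estimate with constant sup bound, regime `t ≥ s`. -/
lemma del_step_sup (hT : IsHoloSG T) (z : X →L[ℂ] ℂ) (k : ℕ) {s c e : ℝ}
    (hs : 0 < s) (hc0 : 0 ≤ c)
    (hb : ∀ u : ℝ, s ≤ u → ‖dualDeriv T (k+1) z u‖ ≤ c * u ^ e) :
    ∀ t : ℝ, s ≤ t → ‖dualDeriv T k (z - z.comp (T s)) t‖ ≤ c * 2 ^ |e| * s * t ^ e := by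
  intro t hst
  have ht : 0 < t := lt_of_lt_of_le hs hst
  rw [dd_del hT z k hs ht]
  have hB : ∀ u ∈ Icc t (t+s), ‖dualDeriv T (k+1) z u‖ ≤ c * (2 ^ |e| * t ^ e) := by
    intro u hu
    calc ‖dualDeriv T (k+1) z u‖ ≤ c * u ^ e := hb u (le_trans hst hu.1)
      _ ≤ c * (2 ^ |e| * t ^ e) :=
        mul_le_mul_of_nonneg_left (rpow_le_two_rpow ht hu.1 (by linarith [hu.2])) hc0
  have h := diff_le_const (fun u hu => hasDerivAt_dd hT z k hu)
    (continuousOn_dd hT z (k+1)) ht (by linarith : t ≤ t + s) hB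
  rw [norm_sub_rev]
  calc ‖dualDeriv T k z (t+s) - dualDeriv T k z t‖
      ≤ (t + s - t) * (c * (2 ^ |e| * t ^ e)) := h
    _ = c * 2 ^ |e| * s * t ^ e := by ring_nf

/-- P-step: difference estimate integrating a power `e < -1`. -/
lemma del_step_int (hT : IsHoloSG T) (z : X →L[ℂ] ℂ) (k : ℕ) {s c e R : ℝ}
    (hs : 0 < s) (hc0 : 0 ≤ c) (he : e < -1)
    (hb : ∀ u : ℝ, 0 < u → u ≤ R → ‖dualDeriv T (k+1) z u‖ ≤ c * u ^ e) :
    ∀ t : ℝ, 0 < t → t + s ≤ R →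
      ‖dualDeriv T k (z - z.comp (T s)) t‖ ≤ (c / (-e-1)) * t ^ (e+1) := by
  intro t ht htR
  rw [dd_del hT z k hs ht]
  have hdiff : ‖dualDeriv T k z (t+s) - dualDeriv T k z t‖
      ≤ c * (((t+s) ^ (e+1) - t ^ (e+1)) / (e+1)) := by
    apply diff_le_rpow (fun u hu => hasDerivAt_dd hT z k hu)
      (continuousOn_dd hT z (k+1)) ht (by linarith : t ≤ t + s)
      (fun u hu => hb u (lt_of_lt_of_le ht hu.1) (by linarith [hu.2]))
      (by linarith : e ≠ -1)
  rw [norm_sub_rev]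
  have hts : (0:ℝ) ≤ (t+s) ^ (e+1) := Real.rpow_nonneg (by linarith) _
  have he1 : 0 < -e-1 := by linarith
  calc ‖dualDeriv T k z (t+s) - dualDeriv T k z t‖
      ≤ c * (((t+s) ^ (e+1) - t ^ (e+1)) / (e+1)) := hdiff
    _ = c * ((t ^ (e+1) - (t+s) ^ (e+1)) / (-e-1)) := by
        have heq2 : ((t+s) ^ (e+1) - t ^ (e+1)) / (e+1)
            = (t ^ (e+1) - (t+s) ^ (e+1)) / (-e-1) := by
          rw [div_eq_div_iff (by linarith) (by linarith)]; ring
        rw [heq2]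
    _ ≤ c * (t ^ (e+1) / (-e-1)) := by
        apply mul_le_mul_of_nonneg_left _ hc0
        gcongr
        linarith
    _ = (c / (-e-1)) * t ^ (e+1) := by ring

/-- last step: difference estimate integrating a power `-1 < e < 0`. -/
lemma del_step_eps (hT : IsHoloSG T) (z : X →L[ℂ] ℂ) (k : ℕ) {s c e R : ℝ}
    (hs : 0 < s) (hc0 : 0 ≤ c) (he1 : -1 < e) (hR : 0 < R)
    (hb : ∀ u : ℝ, 0 < u → u ≤ R → ‖dualDeriv T (k+1) z u‖ ≤ c * u ^ e) :
    ∀ t : ℝ, 0 < t → t + s ≤ R →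
      ‖dualDeriv T k (z - z.comp (T s)) t‖ ≤ (c / (e+1)) * R ^ (e+1) := by
  intro t ht htR
  rw [dd_del hT z k hs ht]
  have hdiff : ‖dualDeriv T k z (t+s) - dualDeriv T k z t‖
      ≤ c * (((t+s) ^ (e+1) - t ^ (e+1)) / (e+1)) := by
    apply diff_le_rpow (fun u hu => hasDerivAt_dd hT z k hu)
      (continuousOn_dd hT z (k+1)) ht (by linarith : t ≤ t + s)
      (fun u hu => hb u (lt_of_lt_of_le ht hu.1) (by linarith [hu.2]))
      (by linarith : e ≠ -1)
  rw [norm_sub_rev]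
  have ht1 : (0:ℝ) ≤ t ^ (e+1) := Real.rpow_nonneg ht.le _
  have he2 : 0 < e + 1 := by linarith
  have hRb : (t+s) ^ (e+1) ≤ R ^ (e+1) :=
    Real.rpow_le_rpow (by linarith) htR (by linarith)
  calc ‖dualDeriv T k z (t+s) - dualDeriv T k z t‖
      ≤ c * (((t+s) ^ (e+1) - t ^ (e+1)) / (e+1)) := hdiff
    _ ≤ c * (R ^ (e+1) / (e+1)) := by
        apply mul_le_mul_of_nonneg_left _ hc0
        gcongr
        linarith
    _ = (c / (e+1)) * R ^ (e+1) := by ring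

end SG17
end Part6
section Part7
open Filter Topology Set MeasureTheory Function
namespace SG17
variable {X : Type*} [NormedAddCommGroup X] [NormedSpace ℂ X] [CompleteSpace X]
variable {T : ℝ → X →L[ℂ] X}

/-- difference operator `z ↦ z - z∘T_s`. -/
def delOp (T : ℝ → X →L[ℂ] X) (s : ℝ) (z : X →L[ℂ] ℂ) : X →L[ℂ] ℂ := z - z.comp (T s)

/-- Q-chain: iterated differences, regime `t' ≥ s`. -/
lemma chainQ (hT : IsHoloSG T) (e : ℝ) :
    ∀ (N : ℕ), ∃ c, 0 ≤ c ∧ ∀ (z : X →L[ℂ] ℂ) (k : ℕ) (c₀ : ℝ), 0 ≤ c₀ →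
    (∀ u : ℝ, 0 < u → ‖dualDeriv T (k+N) z u‖ ≤ c₀ * u ^ e) →
    ∀ s : ℝ, 0 < s → ∀ t', s ≤ t' →
      ‖dualDeriv T k ((delOp T s)^[N] z) t'‖ ≤ c * c₀ * s ^ N * t' ^ e := by
  intro N
  induction N with
  | zero =>
    exact ⟨1, zero_le_one, fun z k c₀ hc₀ hb s hs t' hst => by
      simpa using hb t' (lt_of_lt_of_le hs hst)⟩
  | succ N IH =>
    obtain ⟨c, hc0, hbd⟩ := IH
    refine ⟨c * 2 ^ |e|, by positivity, ?_⟩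
    intro z k c₀ hc₀ hb s hs t' hst
    have hb' : ∀ u : ℝ, 0 < u → ‖dualDeriv T (k+1+N) z u‖ ≤ c₀ * u ^ e := by
      intro u hu
      have h : k + 1 + N = k + (N + 1) := by omega
      rw [h]
      exact hb u hu
    have hiter : (delOp T s)^[N+1] z = delOp T s ((delOp T s)^[N] z) :=
      Function.iterate_succ_apply' _ _ _
    rw [hiter]
    have hstep := del_step_sup hT ((delOp T s)^[N] z) k (c := c * c₀ * s ^ N) (e := e) hs
      (by positivity) (fun u hu => hbd z (k+1) c₀ hc₀ hb' s hs u hu) t' hst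
    calc ‖dualDeriv T k (delOp T s ((delOp T s)^[N] z)) t'‖
        ≤ (c * c₀ * s ^ N) * 2 ^ |e| * s * t' ^ e := hstep
      _ = (c * 2 ^ |e|) * c₀ * s ^ (N+1) * t' ^ e := by ring

/-- P-chain: iterated differences, regime `t' ≤ s`, integrating powers `< -1`. -/
lemma chainP (hT : IsHoloSG T) :
    ∀ (N : ℕ) (a L : ℝ), 0 < L → a + N < 0 →
    ∃ c, 0 ≤ c ∧ ∀ (z : X →L[ℂ] ℂ) (k : ℕ) (Cs : ℝ → ℝ),
    (∀ s : ℝ, 0 < s → 0 ≤ Cs s ∧ ∀ u : ℝ, 0 < u → u ≤ (L + N) * s →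
      ‖dualDeriv T (k+N) z u‖ ≤ Cs s * u ^ a) →
    ∀ s : ℝ, 0 < s → ∀ t', 0 < t' → t' ≤ L * s →
      ‖dualDeriv T k ((delOp T s)^[N] z) t'‖ ≤ c * Cs s * t' ^ (a + N) := by
  intro N
  induction N with
  | zero =>
    intro a L hL ha
    refine ⟨1, zero_le_one, fun z k Cs hb s hs t' ht' htL => ?_⟩
    have h := (hb s hs).2 t' ht' (by push_cast; linarith)
    simpa using h
  | succ N IH =>
    intro a L hL ha
    have haN : a + N < 0 := by push_cast at ha ⊢; linarith
    obtain ⟨c, hc0, hbd⟩ := IH a (L+1) (by linarith) haN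
    have heN : a + (N:ℝ) < -1 := by push_cast at ha; linarith
    refine ⟨c / (-(a + (N:ℝ)) - 1), by
      have : 0 < -(a + (N:ℝ)) - 1 := by linarith
      positivity, ?_⟩
    intro z k Cs hb s hs t' ht' htL
    have hCs0 : 0 ≤ Cs s := (hb s hs).1
    have hb' : ∀ s : ℝ, 0 < s → 0 ≤ Cs s ∧ ∀ u : ℝ, 0 < u → u ≤ (L + 1 + N) * s →
        ‖dualDeriv T (k+1+N) z u‖ ≤ Cs s * u ^ a := by
      intro s' hs'
      refine ⟨(hb s' hs').1, fun u hu huL => ?_⟩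
      have h : k + 1 + N = k + (N + 1) := by omega
      rw [h]
      apply (hb s' hs').2 u hu
      push_cast at huL ⊢
      nlinarith
    have hiter : (delOp T s)^[N+1] z = delOp T s ((delOp T s)^[N] z) :=
      Function.iterate_succ_apply' _ _ _
    rw [hiter]
    have hstep := del_step_int hT ((delOp T s)^[N] z) k (s := s) (c := c * Cs s)
      (e := a + N) (R := (L+1) * s) hs (by positivity) heN
      (fun u hu huR => hbd z (k+1) Cs hb' s hs u hu (by linarith)) t' ht' (by nlinarith)
    calc ‖dualDeriv T k (delOp T s ((delOp T s)^[N] z)) t'‖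
        ≤ ((c * Cs s) / (-(a + (N:ℝ)) - 1)) * t' ^ ((a + N) + 1) := hstep
      _ = (c / (-(a + (N:ℝ)) - 1)) * Cs s * t' ^ (a + (N+1:ℕ)) := by
          push_cast
          rw [show a + ((N:ℝ) + 1) = (a + N) + 1 by ring]
          ring

/-- Y-chain: `z - Δ_s^N z` keeps the shifted bound. -/
lemma chainY (hT : IsHoloSG T) (k : ℕ) {e : ℝ} (he : e ≤ 0) :
    ∀ N : ℕ, ∃ c, 0 ≤ c ∧ ∀ (z : X →L[ℂ] ℂ) (c₁ : ℝ), 0 ≤ c₁ →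
    (∀ u : ℝ, 0 < u → ‖dualDeriv T k z u‖ ≤ c₁ * u ^ e) →
    ∀ s : ℝ, 0 < s → ∀ t' : ℝ, 0 < t' →
      ‖dualDeriv T k (z - (delOp T s)^[N] z) t'‖ ≤ c * c₁ * (t' + s) ^ e := by
  intro N
  induction N with
  | zero =>
    refine ⟨0, le_refl 0, fun z c₁ hc₁ hb s hs t' ht' => ?_⟩
    simp only [Function.iterate_zero, id_eq, sub_self]
    rw [dd_zero' k ht']
    simp [Real.rpow_nonneg]
  | succ N IH =>
    obtain ⟨c, hc0, hbd⟩ := IH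
    refine ⟨1 + 2 * c, by linarith, ?_⟩
    intro z c₁ hc₁ hb s hs t' ht'
    set w := (delOp T s)^[N] z with hw
    have hiter : (delOp T s)^[N+1] z = w - w.comp (T s) := by
      rw [Function.iterate_succ_apply']; rfl
    have hsplit : z - (delOp T s)^[N+1] z = (z - w) + w.comp (T s) := by
      rw [hiter]; abel
    rw [hsplit, dd_add hT _ _ k ht', dd_shift hT w k hs ht']
    have hts : 0 < t' + s := by linarith
    have hw2 : dualDeriv T k w (t'+s)
        = dualDeriv T k z (t'+s) - dualDeriv T k (z - w) (t'+s) := by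
      have h1 : z - (z - w) = w := by abel
      rw [← dd_sub hT z (z - w) k hts, h1]
    have hmono : ((t'+s)+s) ^ e ≤ (t'+s) ^ e :=
      Real.rpow_le_rpow_of_nonpos hts (by linarith) he
    have hnn : (0:ℝ) ≤ (t'+s) ^ e := Real.rpow_nonneg hts.le _
    have h3 : ‖dualDeriv T k w (t'+s)‖ ≤ (1 + c) * c₁ * (t'+s) ^ e := by
      rw [hw2]
      calc ‖dualDeriv T k z (t'+s) - dualDeriv T k (z-w) (t'+s)‖
          ≤ ‖dualDeriv T k z (t'+s)‖ + ‖dualDeriv T k (z-w) (t'+s)‖ := norm_sub_le _ _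
        _ ≤ c₁ * (t'+s) ^ e + c * c₁ * ((t'+s)+s) ^ e := by
            have := hb (t'+s) hts
            have := hbd z c₁ hc₁ hb s hs (t'+s) hts
            linarith
        _ ≤ (1 + c) * c₁ * (t'+s) ^ e := by
            nlinarith [mul_le_mul_of_nonneg_left hmono (by positivity : (0:ℝ) ≤ c * c₁)]
    calc ‖dualDeriv T k (z - w) t' + dualDeriv T k w (t' + s)‖
        ≤ ‖dualDeriv T k (z - w) t'‖ + ‖dualDeriv T k w (t' + s)‖ := norm_add_le _ _
      _ ≤ c * c₁ * (t' + s) ^ e + (1 + c) * c₁ * (t'+s) ^ e := by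
          have := hbd z c₁ hc₁ hb s hs t' ht'
          linarith
      _ = (1 + 2*c) * c₁ * (t'+s) ^ e := by ring

end SG17
end Part7
section Part8
open Filter Topology Set MeasureTheory
namespace SG17
variable {X : Type*} [NormedAddCommGroup X] [NormedSpace ℂ X] [CompleteSpace X]
variable {T : ℝ → X →L[ℂ] X}

lemma mExp_gt (β : ℝ) : β < (mExp β : ℝ) := by
  rw [mExp]; push_cast; exact Nat.lt_floor_add_one β

lemma mExp_mono {a b : ℝ} (h : a ≤ b) : mExp a ≤ mExp b :=
  Nat.succ_le_succ (Nat.floor_mono h)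

lemma mExp_pos (β : ℝ) : 1 ≤ mExp β := Nat.succ_le_succ (Nat.zero_le _)

/-- Embedding `Λ^β ⊆ Λ^{β₀}` quantitatively. -/
lemma main_emb (hT : IsHoloSG T) {Cb : ℝ} (hCb : 0 < Cb)
    (hC : ∀ n : ℕ, 1 ≤ n → ∀ t : ℝ, 0 < t →
      ‖iteratedDerivWithin n T (Set.Ioi 0) t‖ ≤ Cb ^ n / t ^ n)
    (β₀ β : ℝ) (hβ₀ : 0 < β₀) (hβ : β₀ < β) :
    ∃ c, 0 ≤ c ∧ ∀ (xs : X →L[ℂ] ℂ) (S : ℝ), 0 ≤ S →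
    (∀ u : ℝ, 0 < u → ‖dualDeriv T (mExp β) xs u‖ ≤ S * u ^ (β - (mExp β : ℝ))) →
    ∀ t : ℝ, 0 < t →
      ‖dualDeriv T (mExp β₀) xs t‖ ≤ c * (S + ‖xs‖) * t ^ (β₀ - (mExp β₀ : ℝ)) := by
  have claim : ∀ j : ℕ, ∃ c, 0 ≤ c ∧ ∀ (xs : X →L[ℂ] ℂ) (S : ℝ), 0 ≤ S →
      (∀ u : ℝ, 0 < u → ‖dualDeriv T (mExp β) xs u‖ ≤ S * u ^ (β - (mExp β : ℝ))) →
      ∀ k : ℕ, k + j = mExp β → β₀ < (k:ℝ) → ∀ t : ℝ, 0 < t → t ≤ 1 →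
      ‖dualDeriv T k xs t‖ ≤ c * (S + ‖xs‖) * t ^ (β₀ - (k : ℝ)) := by
    intro j
    induction j with
    | zero =>
      refine ⟨1, zero_le_one, ?_⟩
      intro xs S hS0 hS k hk hkβ t ht ht1
      have hkm : k = mExp β := by omega
      subst hkm
      calc ‖dualDeriv T (mExp β) xs t‖ ≤ S * t ^ (β - (mExp β : ℝ)) := hS t ht
        _ ≤ S * t ^ (β₀ - (mExp β : ℝ)) := by
            apply mul_le_mul_of_nonneg_left _ hS0
            exact Real.rpow_le_rpow_of_exponent_ge ht ht1 (by linarith)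
        _ ≤ 1 * (S + ‖xs‖) * t ^ (β₀ - (mExp β : ℝ)) := by
            have := norm_nonneg xs
            have := Real.rpow_nonneg ht.le (β₀ - (mExp β : ℝ))
            nlinarith
    | succ j IH =>
      obtain ⟨c, hc0, hbd⟩ := IH
      by_cases hok : j + 1 ≤ mExp β ∧ β₀ < ((mExp β - (j+1) : ℕ) : ℝ)
      case neg =>
        refine ⟨0, le_refl 0, ?_⟩
        intro xs S hS0 hS k hk hkβ t ht ht1
        exfalso
        apply hok
        constructor
        · omega
        · have : k = mExp β - (j+1) := by omega
          rwa [← this]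
      case pos =>
        set k₀ := mExp β - (j+1) with hk₀def
        have hk₀β : β₀ < (k₀ : ℝ) := hok.2
        refine ⟨Cb ^ k₀ + c / ((k₀:ℝ) - β₀), by
          have h1 : (0:ℝ) < Cb ^ k₀ := by positivity
          have h2 : (0:ℝ) ≤ c / ((k₀:ℝ) - β₀) := by
            apply div_nonneg hc0; linarith
          linarith, ?_⟩
        intro xs S hS0 hS k hk hkβ t ht ht1
        have hkk : k₀ = k := by omega
        rw [hkk]
        have hX : (0:ℝ) ≤ S + ‖xs‖ := by have := norm_nonneg xs; linarith
        have hb' : ∀ u : ℝ, 0 < u → u ≤ 1 →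
            ‖dualDeriv T (k+1) xs u‖ ≤ (c * (S + ‖xs‖)) * u ^ (β₀ - ((k:ℝ)+1)) := by
          intro u hu hu1
          have h := hbd xs S hS0 hS (k+1) (by omega) (by push_cast; linarith) u hu hu1
          calc ‖dualDeriv T (k+1) xs u‖ ≤ c * (S + ‖xs‖) * u ^ (β₀ - ((k+1:ℕ) : ℝ)) := h
            _ = (c * (S + ‖xs‖)) * u ^ (β₀ - ((k:ℝ)+1)) := by push_cast; ring_nf
        have hdown := dd_down_one hT xs (k := k) (γ := β₀) (c := c * (S + ‖xs‖))
          hkβ (by positivity) hb' t ht ht1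
        have hk1 : 1 ≤ k := by
          by_contra h
          have : k = 0 := by omega
          rw [this] at hkβ
          simp at hkβ
          linarith
        have hdd1 : ‖dualDeriv T k xs 1‖ ≤ Cb ^ k * ‖xs‖ := by
          have := norm_dd_le hT xs hk1 hC (one_pos)
          simpa [mul_comm] using this
        have hrp1 : (1:ℝ) ≤ t ^ (β₀ - (k:ℝ)) :=
          Real.one_le_rpow_of_pos_of_le_one_of_nonpos ht ht1 (by linarith)
        have hrpnn : (0:ℝ) ≤ t ^ (β₀ - (k:ℝ)) := by linarith
        calc ‖dualDeriv T k xs t‖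
            ≤ ‖dualDeriv T k xs 1‖ + (c * (S + ‖xs‖) / ((k:ℝ) - β₀)) * t ^ (β₀ - (k:ℝ)) :=
              hdown
          _ ≤ Cb ^ k * ‖xs‖ * t ^ (β₀ - (k:ℝ))
              + (c / ((k:ℝ) - β₀)) * (S + ‖xs‖) * t ^ (β₀ - (k:ℝ)) := by
              have h1 : ‖dualDeriv T k xs 1‖ ≤ Cb ^ k * ‖xs‖ * t ^ (β₀ - (k:ℝ)) := by
                apply hdd1.trans
                apply le_mul_of_one_le_right (by positivity) hrp1
              have h2 : (c * (S + ‖xs‖) / ((k:ℝ) - β₀)) * t ^ (β₀ - (k:ℝ))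
                  = (c / ((k:ℝ) - β₀)) * (S + ‖xs‖) * t ^ (β₀ - (k:ℝ)) := by ring
              linarith [h2 ▸ le_refl ((c * (S + ‖xs‖) / ((k:ℝ) - β₀)) * t ^ (β₀ - (k:ℝ)))]
          _ ≤ (Cb ^ k + c / ((k:ℝ) - β₀)) * (S + ‖xs‖) * t ^ (β₀ - (k:ℝ)) := by
              have hcb : (0:ℝ) ≤ Cb ^ k := by positivity
              have hcd : (0:ℝ) ≤ c / ((k:ℝ) - β₀) := div_nonneg hc0 (by linarith)
              have hxX : ‖xs‖ ≤ S + ‖xs‖ := by linarith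
              nlinarith [mul_le_mul_of_nonneg_left hxX hcb]
  obtain ⟨c, hc0, hcl⟩ := claim (mExp β - mExp β₀)
  have hm0m : mExp β₀ ≤ mExp β := mExp_mono hβ.le
  refine ⟨max c (Cb ^ (mExp β₀)), le_max_of_le_left hc0, ?_⟩
  intro xs S hS0 hS t ht
  have hX : (0:ℝ) ≤ S + ‖xs‖ := by have := norm_nonneg xs; linarith
  have hrpnn : (0:ℝ) ≤ t ^ (β₀ - (mExp β₀:ℝ)) := Real.rpow_nonneg ht.le _
  rcases le_or_gt t 1 with ht1 | ht1
  · have h := hcl xs S hS0 hS (mExp β₀) (by omega) (mExp_gt β₀) t ht ht1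
    calc ‖dualDeriv T (mExp β₀) xs t‖ ≤ c * (S + ‖xs‖) * t ^ (β₀ - (mExp β₀:ℝ)) := h
      _ ≤ max c (Cb ^ (mExp β₀)) * (S + ‖xs‖) * t ^ (β₀ - (mExp β₀:ℝ)) := by
          apply mul_le_mul_of_nonneg_right _ hrpnn
          apply mul_le_mul_of_nonneg_right (le_max_left _ _) hX
  · have h := norm_dd_le hT xs (mExp_pos β₀) hC ht
    have hpow : Cb ^ (mExp β₀) / t ^ (mExp β₀) = Cb ^ (mExp β₀) * t ^ (-(mExp β₀:ℝ)) := by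
      rw [← Real.rpow_natCast t (mExp β₀), div_eq_mul_inv, ← Real.rpow_neg ht.le]
    have hexp : t ^ (-(mExp β₀:ℝ)) ≤ t ^ (β₀ - (mExp β₀:ℝ)) :=
      Real.rpow_le_rpow_of_exponent_le (by linarith) (by linarith)
    calc ‖dualDeriv T (mExp β₀) xs t‖ ≤ ‖xs‖ * (Cb ^ (mExp β₀) / t ^ (mExp β₀)) := h
      _ = Cb ^ (mExp β₀) * ‖xs‖ * t ^ (-(mExp β₀:ℝ)) := by rw [hpow]; ring
      _ ≤ max c (Cb ^ (mExp β₀)) * (S + ‖xs‖) * t ^ (β₀ - (mExp β₀:ℝ)) := by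
          have h1 : Cb ^ (mExp β₀) * ‖xs‖ ≤ max c (Cb ^ (mExp β₀)) * (S + ‖xs‖) := by
            have hcb : (0:ℝ) ≤ Cb ^ (mExp β₀) := by positivity
            have := norm_nonneg xs
            nlinarith [le_max_right c (Cb ^ (mExp β₀))]
          have h2 : (0:ℝ) ≤ Cb ^ (mExp β₀) * ‖xs‖ := by positivity
          have h3 : (0:ℝ) ≤ t ^ (-(mExp β₀:ℝ)) := Real.rpow_nonneg ht.le _
          nlinarith [mul_le_mul_of_nonneg_left hexp (le_trans h2 h1)]
end SG17
end Part8
section Part9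
open Filter Topology Set MeasureTheory
namespace SG17
variable {X : Type*} [NormedAddCommGroup X] [NormedSpace ℂ X] [CompleteSpace X]
variable {T : ℝ → X →L[ℂ] X}

set_option maxHeartbeats 1000000 in
lemma main_rev (hT : IsHoloSG T) {Cb : ℝ} (hCb : 0 < Cb)
    (hC : ∀ n : ℕ, 1 ≤ n → ∀ t : ℝ, 0 < t →
      ‖iteratedDerivWithin n T (Set.Ioi 0) t‖ ≤ Cb ^ n / t ^ n)
    (β₀ β₁ θ β : ℝ) (hβ₀ : 0 < β₀) (hββ : β₀ < β₁) (hθ0 : 0 < θ) (hθ1 : θ < 1)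
    (hβdef : β = (1 - θ) * β₀ + θ * β₁) :
    ∃ c, 0 ≤ c ∧ ∀ (xs : X →L[ℂ] ℂ) (M : ℝ), 0 ≤ M → MemLambda T β₀ xs →
    (∀ t : ℝ, 0 < t → t ^ (-θ) * Kfun T β₀ β₁ t xs ≤ M) →
    ∀ t : ℝ, 0 < t → ‖dualDeriv T (mExp β) xs t‖ ≤ c * M * t ^ (β - (mExp β : ℝ)) := by
  have hβlo : β₀ < β := by nlinarith
  have hβhi : β < β₁ := by nlinarith
  set m₀ := mExp β₀
  set m := mExp β
  set m₁ := mExp β₁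
  have hm₀β : β₀ < (m₀:ℝ) := mExp_gt β₀
  have hmβ : β < (m:ℝ) := mExp_gt β
  have hm₁β : β₁ < (m₁:ℝ) := mExp_gt β₁
  have hm0le : m₀ ≤ m₁ := mExp_mono (by linarith)
  have hmle : m ≤ m₁ := mExp_mono (by linarith)
  set cc := max (Cb ^ (m₁ - m₀) * 2 ^ ((m₁:ℝ) - β₀)) 1 with hccdef
  have hcc1 : (1:ℝ) ≤ cc := le_max_right _ _
  have hcc0 : (0:ℝ) ≤ cc := by linarith
  -- Step r1 : bound at order m₁
  have hr1 : ∀ (xs : X →L[ℂ] ℂ) (M : ℝ), 0 ≤ M → MemLambda T β₀ xs →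
      (∀ t : ℝ, 0 < t → t ^ (-θ) * Kfun T β₀ β₁ t xs ≤ M) →
      ∀ s : ℝ, 0 < s → ‖dualDeriv T m₁ xs s‖ ≤ cc * M * s ^ (β - (m₁:ℝ)) := by
    intro xs M hM0 hmem hK s hs
    set τ := s ^ (β₁ - β₀) with hτdef
    have hτ : 0 < τ := Real.rpow_pos_of_pos hs _
    have hsp : (0:ℝ) < s ^ (β₀ - (m₁:ℝ)) := Real.rpow_pos_of_pos hs _
    have hKb : Kfun T β₀ β₁ τ xs ≤ τ ^ θ * M := by
      have h := hK τ hτ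
      have h2 := mul_le_mul_of_nonneg_left h (Real.rpow_nonneg hτ.le θ)
      calc Kfun T β₀ β₁ τ xs = (τ ^ θ * τ ^ (-θ)) * Kfun T β₀ β₁ τ xs := by
            rw [rpow_cancel hτ θ]; ring
        _ = τ ^ θ * (τ ^ (-θ) * Kfun T β₀ β₁ τ xs) := by ring
        _ ≤ τ ^ θ * M := h2
    have key : ∀ x0 x1 : X →L[ℂ] ℂ, MemLambda T β₀ x0 → MemLambda T β₁ x1 → xs = x0 + x1 →
        ‖dualDeriv T m₁ xs s‖ / (cc * s ^ (β₀ - (m₁:ℝ)))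
          ≤ lambdaNorm T β₀ x0 + τ * lambdaNorm T β₁ x1 := by
      intro x0 x1 h0 h1 hx
      have hccsp : 0 < cc * s ^ (β₀ - (m₁:ℝ)) := mul_pos (lt_of_lt_of_le one_pos hcc1) hsp
      rw [div_le_iff₀ hccsp]
      have hdd : dualDeriv T m₁ xs s = dualDeriv T m₁ x0 s + dualDeriv T m₁ x1 s := by
        rw [hx]; exact dd_add hT x0 x1 m₁ hs
      have hh0 := dd_high hT hCb hC x0 (k₀ := m₀) (k := m₁) hm0le
        (γ := β₀) (c := lsup T β₀ x0) hm₀β.le (lsup_nonneg β₀ x0) (dd_le_lsup h0) s hs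
      have hh1 := dd_le_lsup h1 s hs
      have hsplit : s ^ (β₁ - (m₁:ℝ)) = τ * s ^ (β₀ - (m₁:ℝ)) := by
        rw [hτdef, ← Real.rpow_add hs]
        congr 1
        ring
      have hl0 : lsup T β₀ x0 ≤ lambdaNorm T β₀ x0 := lsup_le_lambdaNorm β₀ x0
      have hl1 : lsup T β₁ x1 ≤ lambdaNorm T β₁ x1 := lsup_le_lambdaNorm β₁ x1
      have hl0n : 0 ≤ lsup T β₀ x0 := lsup_nonneg β₀ x0
      have hl1n : 0 ≤ lsup T β₁ x1 := lsup_nonneg β₁ x1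
      have hccA : Cb ^ (m₁ - m₀) * 2 ^ ((m₁:ℝ) - β₀) ≤ cc := le_max_left _ _
      have hA0 : (0:ℝ) ≤ Cb ^ (m₁ - m₀) * 2 ^ ((m₁:ℝ) - β₀) := by positivity
      calc ‖dualDeriv T m₁ xs s‖
          ≤ ‖dualDeriv T m₁ x0 s‖ + ‖dualDeriv T m₁ x1 s‖ := by
            rw [hdd]; exact norm_add_le _ _
        _ ≤ lsup T β₀ x0 * (Cb ^ (m₁ - m₀) * 2 ^ ((m₁:ℝ) - β₀)) * s ^ (β₀ - (m₁:ℝ))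
            + lsup T β₁ x1 * (τ * s ^ (β₀ - (m₁:ℝ))) := by
            rw [← hsplit]
            exact add_le_add hh0 hh1
        _ ≤ (lambdaNorm T β₀ x0 + τ * lambdaNorm T β₁ x1) * (cc * s ^ (β₀ - (m₁:ℝ))) := by
            have hN0 : 0 ≤ lambdaNorm T β₀ x0 := lambdaNorm_nonneg β₀ x0
            have hN1 : 0 ≤ lambdaNorm T β₁ x1 := lambdaNorm_nonneg β₁ x1
            have e1 : lsup T β₀ x0 * (Cb ^ (m₁ - m₀) * 2 ^ ((m₁:ℝ) - β₀))
                ≤ lambdaNorm T β₀ x0 * cc := mul_le_mul hl0 hccA hA0 hN0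
            have e2 : lsup T β₁ x1 ≤ lambdaNorm T β₁ x1 * cc :=
              le_trans hl1 (le_mul_of_one_le_right hN1 hcc1)
            have e1' := mul_le_mul_of_nonneg_right e1 hsp.le
            have e2' := mul_le_mul_of_nonneg_right e2 (mul_nonneg hτ.le hsp.le)
            calc lsup T β₀ x0 * (Cb ^ (m₁ - m₀) * 2 ^ ((m₁:ℝ) - β₀)) * s ^ (β₀ - (m₁:ℝ))
                + lsup T β₁ x1 * (τ * s ^ (β₀ - (m₁:ℝ)))
                ≤ lambdaNorm T β₀ x0 * cc * s ^ (β₀ - (m₁:ℝ))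
                  + lambdaNorm T β₁ x1 * cc * (τ * s ^ (β₀ - (m₁:ℝ))) := by
                  have := e2'
                  have := e1'
                  nlinarith [e1', e2']
              _ = (lambdaNorm T β₀ x0 + τ * lambdaNorm T β₁ x1) * (cc * s ^ (β₀ - (m₁:ℝ))) := by
                  ring
    have hKd : ‖dualDeriv T m₁ xs s‖ / (cc * s ^ (β₀ - (m₁:ℝ))) ≤ Kfun T β₀ β₁ τ xs :=
      le_Kfun hmem key
    have hccsp : 0 < cc * s ^ (β₀ - (m₁:ℝ)) := mul_pos (lt_of_lt_of_le one_pos hcc1) hsp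
    have h5 : ‖dualDeriv T m₁ xs s‖ ≤ cc * s ^ (β₀ - (m₁:ℝ)) * (τ ^ θ * M) := by
      rw [div_le_iff₀ hccsp] at hKd
      calc ‖dualDeriv T m₁ xs s‖ ≤ Kfun T β₀ β₁ τ xs * (cc * s ^ (β₀ - (m₁:ℝ))) := hKd
        _ ≤ (τ ^ θ * M) * (cc * s ^ (β₀ - (m₁:ℝ))) := by
            apply mul_le_mul_of_nonneg_right hKb hccsp.le
        _ = cc * s ^ (β₀ - (m₁:ℝ)) * (τ ^ θ * M) := by ring
    have hτθ : τ ^ θ = s ^ ((β₁ - β₀) * θ) := by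
      rw [hτdef, ← Real.rpow_mul hs.le]
    calc ‖dualDeriv T m₁ xs s‖ ≤ cc * s ^ (β₀ - (m₁:ℝ)) * (τ ^ θ * M) := h5
      _ = cc * M * (s ^ (β₀ - (m₁:ℝ)) * s ^ ((β₁ - β₀) * θ)) := by rw [hτθ]; ring
      _ = cc * M * s ^ (β - (m₁:ℝ)) := by
          rw [← Real.rpow_add hs]
          congr 2
          rw [hβdef]
          ring
  -- Step r2 : downward induction from m₁ to m
  have claim : ∀ j : ℕ, ∃ c, 0 ≤ c ∧ ∀ (xs : X →L[ℂ] ℂ) (M : ℝ), 0 ≤ M →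
      MemLambda T β₀ xs → (∀ t : ℝ, 0 < t → t ^ (-θ) * Kfun T β₀ β₁ t xs ≤ M) →
      ∀ k : ℕ, k + j = m₁ → m ≤ k → ∀ t : ℝ, 0 < t →
        ‖dualDeriv T k xs t‖ ≤ c * M * t ^ (β - (k:ℝ)) := by
    intro j
    induction j with
    | zero =>
      refine ⟨cc, hcc0, ?_⟩
      intro xs M hM0 hmem hK k hk hmk t ht
      have : k = m₁ := by omega
      subst this
      exact hr1 xs M hM0 hmem hK t ht
    | succ j IH =>
      obtain ⟨c, hc0, hbd⟩ := IH
      by_cases hok : j + 1 ≤ m₁ ∧ m ≤ m₁ - (j+1)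
      case neg =>
        refine ⟨0, le_refl 0, ?_⟩
        intro xs M hM0 hmem hK k hk hmk t ht
        exfalso
        exact hok ⟨by omega, by omega⟩
      case pos =>
        set k₀ := m₁ - (j+1) with hk₀def
        have hk₀β : β < (k₀:ℝ) := lt_of_lt_of_le hmβ (by exact_mod_cast hok.2)
        refine ⟨c / ((k₀:ℝ) - β), div_nonneg hc0 (by linarith), ?_⟩
        intro xs M hM0 hmem hK k hk hmk t ht
        have hkk : k₀ = k := by omega
        rw [hkk] at hk₀β ⊢
        have hk1 : 1 ≤ k := le_trans (mExp_pos β) hmk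
        have hb' : ∀ u : ℝ, 0 < u →
            ‖dualDeriv T (k+1) xs u‖ ≤ (c * M) * u ^ (β - ((k:ℝ)+1)) := by
          intro u hu
          have h := hbd xs M hM0 hmem hK (k+1) (by omega) (by omega) u hu
          calc ‖dualDeriv T (k+1) xs u‖ ≤ c * M * u ^ (β - ((k+1:ℕ):ℝ)) := h
            _ = (c * M) * u ^ (β - ((k:ℝ)+1)) := by push_cast; ring_nf
        have hdown := dd_down_infty hT hC xs hk1 (γ := β) (c := c * M) hk₀β
          (mul_nonneg hc0 hM0) hb' t ht
        calc ‖dualDeriv T k xs t‖ ≤ ((c * M) / ((k:ℝ) - β)) * t ^ (β - (k:ℝ)) := hdown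
          _ = (c / ((k:ℝ) - β)) * M * t ^ (β - (k:ℝ)) := by ring
  obtain ⟨c, hc0, hcl⟩ := claim (m₁ - m)
  exact ⟨c, hc0, fun xs M hM0 hmem hK t ht =>
    hcl xs M hM0 hmem hK m (by omega) (le_refl m) t ht⟩

end SG17
end Part9
section Part10
open Filter Topology Set MeasureTheory Function
namespace SG17
variable {X : Type*} [NormedAddCommGroup X] [NormedSpace ℂ X] [CompleteSpace X]
variable {T : ℝ → X →L[ℂ] X}

/-- bounds for `x0 = Δ_s^m xs` : the `m₀`-th derivative bound. -/
lemma x0_deriv_bound (hT : IsHoloSG T) {Cb : ℝ} (hCb : 0 < Cb)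
    (hC : ∀ n : ℕ, 1 ≤ n → ∀ t : ℝ, 0 < t →
      ‖iteratedDerivWithin n T (Set.Ioi 0) t‖ ≤ Cb ^ n / t ^ n)
    (β₀ β : ℝ) (hβ₀ : 0 < β₀) (hβ : β₀ < β) :
    ∃ c, 0 ≤ c ∧ ∀ (xs : X →L[ℂ] ℂ) (S : ℝ), 0 ≤ S →
      (∀ u : ℝ, 0 < u → ‖dualDeriv T (mExp β) xs u‖ ≤ S * u ^ (β - (mExp β : ℝ))) →
      ∀ s : ℝ, 0 < s → ∀ t' : ℝ, 0 < t' →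
      ‖dualDeriv T (mExp β₀) ((delOp T s)^[mExp β] xs) t'‖
        ≤ c * S * s ^ (β - β₀) * t' ^ (β₀ - (mExp β₀ : ℝ)) := by
  set m₀ := mExp β₀
  set m := mExp β
  have hm₀β : β₀ < (m₀:ℝ) := mExp_gt β₀
  have hmβ : β < (m:ℝ) := mExp_gt β
  have hcast : ((m₀ + m : ℕ):ℝ) = (m₀:ℝ) + (m:ℝ) := by push_cast; ring
  set A2 := Cb ^ (m₀ + m - m) * 2 ^ (((m₀ + m : ℕ):ℝ) - β) with hA2def
  have hA20 : (0:ℝ) ≤ A2 := by positivity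
  obtain ⟨cq, hcq0, hq⟩ := chainQ hT (β - ((m₀ + m : ℕ):ℝ)) m
  obtain ⟨cp, hcp0, hp⟩ := chainP hT m (β₀ - ((m₀ + m : ℕ):ℝ)) 1 one_pos
    (by rw [hcast]; push_cast; linarith)
  set cP := cp * A2 * (1 + (m:ℝ)) ^ (β - β₀) with hcPdef
  have hcP0 : 0 ≤ cP := by positivity
  refine ⟨cq * A2 + cP, by positivity, ?_⟩
  intro xs S hS0 hS s hs t' ht'
  -- high-order bound at m₀ + m
  have hbase : ∀ u : ℝ, 0 < u →
      ‖dualDeriv T (m₀ + m) xs u‖ ≤ (S * A2) * u ^ (β - ((m₀ + m : ℕ):ℝ)) := by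
    intro u hu
    have h := dd_high hT hCb hC xs (k₀ := m) (k := m₀ + m) (Nat.le_add_left m m₀)
      (γ := β) (c := S) hmβ.le hS0 hS u hu
    calc ‖dualDeriv T (m₀ + m) xs u‖
        ≤ S * (Cb ^ (m₀ + m - m) * 2 ^ (((m₀ + m : ℕ):ℝ) - β)) * u ^ (β - ((m₀+m:ℕ):ℝ)) := h
      _ = (S * A2) * u ^ (β - ((m₀ + m : ℕ):ℝ)) := by rw [hA2def]
  have hSA0 : 0 ≤ S * A2 := mul_nonneg hS0 hA20
  have htp0 : (0:ℝ) ≤ t' ^ (β₀ - (m₀:ℝ)) := Real.rpow_nonneg ht'.le _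
  have hsp0 : (0:ℝ) ≤ s ^ (β - β₀) := Real.rpow_nonneg hs.le _
  rcases le_total s t' with hst' | ht's
  · -- regime t' ≥ s : Q-chain
    have h := hq xs m₀ (S * A2) hSA0 hbase s hs t' hst'
    calc ‖dualDeriv T m₀ ((delOp T s)^[m] xs) t'‖
        ≤ cq * (S * A2) * s ^ m * t' ^ (β - ((m₀ + m : ℕ):ℝ)) := h
      _ = cq * (S * A2) * (s ^ m * t' ^ (β - ((m₀ + m : ℕ):ℝ))) := by ring
      _ ≤ cq * (S * A2) * (s ^ (β - β₀) * t' ^ (β₀ - (m₀:ℝ))) := by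
          apply mul_le_mul_of_nonneg_left _ (by positivity)
          have e1 : t' ^ (β - ((m₀ + m : ℕ):ℝ))
              = t' ^ (β - β₀ - (m:ℝ)) * t' ^ (β₀ - (m₀:ℝ)) := by
            rw [← Real.rpow_add ht', hcast]
            congr 1
            ring
          have e2 : t' ^ (β - β₀ - (m:ℝ)) ≤ s ^ (β - β₀ - (m:ℝ)) :=
            Real.rpow_le_rpow_of_nonpos hs hst' (by linarith)
          have e3 : s ^ m * s ^ (β - β₀ - (m:ℝ)) = s ^ (β - β₀) := by
            rw [← Real.rpow_natCast s m, ← Real.rpow_add hs]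
            congr 1
            ring
          calc (s:ℝ) ^ m * t' ^ (β - ((m₀ + m : ℕ):ℝ))
              = s ^ m * (t' ^ (β - β₀ - (m:ℝ)) * t' ^ (β₀ - (m₀:ℝ))) := by rw [e1]
            _ ≤ s ^ m * (s ^ (β - β₀ - (m:ℝ)) * t' ^ (β₀ - (m₀:ℝ))) := by
                apply mul_le_mul_of_nonneg_left _ (by positivity)
                exact mul_le_mul_of_nonneg_right e2 htp0
            _ = s ^ (β - β₀) * t' ^ (β₀ - (m₀:ℝ)) := by rw [← mul_assoc, e3]
      _ ≤ (cq * A2 + cP) * S * s ^ (β - β₀) * t' ^ (β₀ - (m₀:ℝ)) := by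
          nlinarith [mul_nonneg hsp0 htp0, mul_nonneg (mul_nonneg hS0 hsp0) htp0]
  · -- regime t' ≤ s : P-chain
    have hPb : ∀ s' : ℝ, 0 < s' →
        (0 ≤ (S * A2) * ((1 + (m:ℝ)) * s') ^ (β - β₀)) ∧
        ∀ u : ℝ, 0 < u → u ≤ (1 + (m:ℕ)) * s' →
          ‖dualDeriv T (m₀ + m) xs u‖
            ≤ (S * A2) * ((1 + (m:ℝ)) * s') ^ (β - β₀) * u ^ (β₀ - ((m₀ + m : ℕ):ℝ)) := by
      intro s' hs'
      constructor
      · positivity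
      · intro u hu huL
        have e1 : u ^ (β - ((m₀+m:ℕ):ℝ))
            = u ^ (β - β₀) * u ^ (β₀ - ((m₀+m:ℕ):ℝ)) := by
          rw [← Real.rpow_add hu]
          congr 1
          ring
        have e2 : u ^ (β - β₀) ≤ ((1 + (m:ℝ)) * s') ^ (β - β₀) := by
          apply Real.rpow_le_rpow hu.le _ (by linarith)
          calc u ≤ (1 + (m:ℕ)) * s' := huL
            _ = (1 + (m:ℝ)) * s' := by push_cast; ring
        calc ‖dualDeriv T (m₀ + m) xs u‖
            ≤ (S * A2) * u ^ (β - ((m₀+m:ℕ):ℝ)) := hbase u hu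
          _ = (S * A2) * u ^ (β - β₀) * u ^ (β₀ - ((m₀+m:ℕ):ℝ)) := by rw [e1]; ring
          _ ≤ (S * A2) * ((1 + (m:ℝ)) * s') ^ (β - β₀) * u ^ (β₀ - ((m₀+m:ℕ):ℝ)) := by
              apply mul_le_mul_of_nonneg_right _ (Real.rpow_nonneg hu.le _)
              exact mul_le_mul_of_nonneg_left e2 hSA0
    have h := hp xs m₀ (fun s' => (S * A2) * ((1 + (m:ℝ)) * s') ^ (β - β₀)) (by
        intro s' hs'
        refine ⟨(hPb s' hs').1, ?_⟩
        intro u hu huL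
        apply (hPb s' hs').2 u hu
        calc u ≤ (1 + (m:ℕ):ℝ) * s' := by
              have : ((1:ℝ) + (m:ℕ)) = (1 + (m:ℕ) : ℕ) := by push_cast; ring
              calc u ≤ (1 + (m:ℕ)) * s' := huL
                _ = ((1:ℝ) + (m:ℕ)) * s' := by norm_num
          _ = (1 + (m:ℕ)) * s' := by norm_num) s hs t' ht' (by linarith [one_mul s])
    have hexp : β₀ - ((m₀ + m : ℕ):ℝ) + (m:ℕ) = β₀ - (m₀:ℝ) := by
      rw [hcast]; push_cast; ring
    have hCsval : (S * A2) * ((1 + (m:ℝ)) * s) ^ (β - β₀)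
        = S * A2 * ((1 + (m:ℝ)) ^ (β - β₀) * s ^ (β - β₀)) := by
      rw [Real.mul_rpow (by positivity) hs.le]
    calc ‖dualDeriv T m₀ ((delOp T s)^[m] xs) t'‖
        ≤ cp * ((S * A2) * ((1 + (m:ℝ)) * s) ^ (β - β₀)) * t' ^ (β₀ - ((m₀+m:ℕ):ℝ) + (m:ℕ)) := h
      _ = cP * S * s ^ (β - β₀) * t' ^ (β₀ - (m₀:ℝ)) := by
          rw [hexp, hCsval, hcPdef]
          ring
      _ ≤ (cq * A2 + cP) * S * s ^ (β - β₀) * t' ^ (β₀ - (m₀:ℝ)) := by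
          have hq0 : 0 ≤ cq * A2 := mul_nonneg hcq0 hA20
          nlinarith [mul_nonneg (mul_nonneg hS0 hsp0) htp0]

end SG17
end Part10
section Part11
open Filter Topology Set MeasureTheory Function
namespace SG17
variable {X : Type*} [NormedAddCommGroup X] [NormedSpace ℂ X] [CompleteSpace X]
variable {T : ℝ → X →L[ℂ] X}

lemma dd_zero_eq (z : X →L[ℂ] ℂ) (u : ℝ) : dualDeriv T 0 z u = z.comp (T u) := by
  rw [dualDeriv, iteratedDerivWithin_zero]

/-- `‖x0‖ ≤ c S s^β` for `x0 = Δ_s^m xs`. -/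
lemma x0_norm_bound (hT : IsHoloSG T) {Cb : ℝ} (hCb : 0 < Cb)
    (hC : ∀ n : ℕ, 1 ≤ n → ∀ t : ℝ, 0 < t →
      ‖iteratedDerivWithin n T (Set.Ioi 0) t‖ ≤ Cb ^ n / t ^ n)
    (β₀ β : ℝ) (hβ₀ : 0 < β₀) (hβ : β₀ < β) :
    ∃ c, 0 ≤ c ∧ ∀ (xs : X →L[ℂ] ℂ) (S : ℝ), 0 ≤ S →
      (∀ u : ℝ, 0 < u → ‖dualDeriv T (mExp β) xs u‖ ≤ S * u ^ (β - (mExp β : ℝ))) →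
      ∀ s : ℝ, 0 < s → ‖(delOp T s)^[mExp β] xs‖ ≤ c * S * s ^ β := by
  set m := mExp β
  have hm1 : 1 ≤ m := mExp_pos β
  have hmβ : β < (m:ℝ) := mExp_gt β
  set ε := min β₀ 1 / 2 with hεdef
  have hε0 : 0 < ε := by
    have := lt_min hβ₀ one_pos
    simp only [hεdef]
    linarith [lt_min hβ₀ one_pos]
  have hε1 : ε < 1 := by
    have h1 : min β₀ 1 ≤ 1 := min_le_right _ _
    simp only [hεdef]; linarith
  have hεβ : ε < β := by
    have h1 : min β₀ 1 ≤ β₀ := min_le_left _ _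
    simp only [hεdef]; linarith
  have hm1c : ((m - 1 : ℕ):ℝ) = (m:ℝ) - 1 := by
    rw [Nat.cast_sub hm1]; norm_num
  obtain ⟨cr, hcr0, hr⟩ := chainP hT (m-1) (ε - (m:ℝ)) 2 two_pos
    (by rw [hm1c]; linarith)
  set Cm := (2 + ((m-1:ℕ):ℝ)) with hCmdef
  have hCm0 : (0:ℝ) < Cm := by rw [hCmdef]; positivity
  refine ⟨(cr * Cm ^ (β - ε)) / ε * 2 ^ ε, by positivity, ?_⟩
  intro xs S hS0 hS s hs
  -- chainP application at k = 1, N = m-1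
  have hbase : ∀ s' : ℝ, 0 < s' →
      0 ≤ (S * (Cm * s') ^ (β - ε)) ∧ ∀ u : ℝ, 0 < u → u ≤ (2 + ((m-1:ℕ):ℝ)) * s' →
        ‖dualDeriv T (1 + (m-1)) xs u‖ ≤ (S * (Cm * s') ^ (β - ε)) * u ^ (ε - (m:ℝ)) := by
    intro s' hs'
    constructor
    · positivity
    · intro u hu huL
      have h1m : 1 + (m - 1) = m := by omega
      rw [h1m]
      have e1 : u ^ (β - (m:ℝ)) = u ^ (β - ε) * u ^ (ε - (m:ℝ)) := by
        rw [← Real.rpow_add hu]; congr 1; ring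
      have e2 : u ^ (β - ε) ≤ (Cm * s') ^ (β - ε) := by
        apply Real.rpow_le_rpow hu.le _ (by linarith)
        rw [hCmdef]
        exact huL
      calc ‖dualDeriv T m xs u‖ ≤ S * u ^ (β - (m:ℝ)) := hS u hu
        _ = S * u ^ (β - ε) * u ^ (ε - (m:ℝ)) := by rw [e1]; ring
        _ ≤ (S * (Cm * s') ^ (β - ε)) * u ^ (ε - (m:ℝ)) := by
            apply mul_le_mul_of_nonneg_right _ (Real.rpow_nonneg hu.le _)
            exact mul_le_mul_of_nonneg_left e2 hS0
  have hrr := hr xs 1 (fun s' => S * (Cm * s') ^ (β - ε)) hbase s hs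
  -- one more step with del_step_eps
  have heps : ∀ t' : ℝ, 0 < t' → t' ≤ s →
      ‖dualDeriv T 0 ((delOp T s)^[m] xs) t'‖
        ≤ ((cr * (S * (Cm * s) ^ (β - ε))) / ε) * (2*s) ^ (ε - 1 + 1) := by
    intro t' ht' ht's
    have hiter : (delOp T s)^[m] xs = delOp T s ((delOp T s)^[m-1] xs) := by
      have h1m : m = (m-1) + 1 := by omega
      calc (delOp T s)^[m] xs = (delOp T s)^[(m-1)+1] xs := by rw [← h1m]
        _ = delOp T s ((delOp T s)^[m-1] xs) := Function.iterate_succ_apply' _ _ _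
    rw [hiter]
    have hstep := del_step_eps hT ((delOp T s)^[m-1] xs) 0 (s := s)
      (c := cr * (S * (Cm * s) ^ (β - ε))) (e := ε - 1) (R := 2*s) hs
      (by positivity) (by linarith) (by linarith)
      (fun u hu huR => by
        have h := hrr u hu (by linarith)
        have hexp : ε - (m:ℝ) + ((m-1:ℕ):ℝ) = ε - 1 := by rw [hm1c]; ring
        rw [hexp] at h
        calc ‖dualDeriv T (0+1) ((delOp T s)^[m-1] xs) u‖
            = ‖dualDeriv T 1 ((delOp T s)^[m-1] xs) u‖ := by norm_num
          _ ≤ cr * (S * (Cm * s) ^ (β - ε)) * u ^ (ε - 1) := h)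
      t' ht' (by linarith)
    have he2 : ε - 1 + 1 = ε := by ring
    rw [he2] at hstep
    rw [he2]
    exact hstep
  -- simplify the constant
  have hconst : ∀ t' : ℝ, 0 < t' → t' ≤ s →
      ‖dualDeriv T 0 ((delOp T s)^[m] xs) t'‖
        ≤ ((cr * Cm ^ (β - ε)) / ε * 2 ^ ε) * S * s ^ β := by
    intro t' ht' ht's
    have h := heps t' ht' ht's
    have he2 : ε - 1 + 1 = ε := by ring
    rw [he2] at h
    have e3 : (Cm * s) ^ (β - ε) = Cm ^ (β - ε) * s ^ (β - ε) :=
      Real.mul_rpow hCm0.le hs.le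
    have e4 : (2*s) ^ ε = 2 ^ ε * s ^ ε := Real.mul_rpow (by norm_num) hs.le
    have e5 : s ^ (β - ε) * s ^ ε = s ^ β := by
      rw [← Real.rpow_add hs]; congr 1; ring
    calc ‖dualDeriv T 0 ((delOp T s)^[m] xs) t'‖
        ≤ ((cr * (S * (Cm * s) ^ (β - ε))) / ε) * (2*s) ^ ε := h
      _ = ((cr * Cm ^ (β - ε)) / ε * 2 ^ ε) * S * (s ^ (β - ε) * s ^ ε) := by
          rw [e3, e4]; ring
      _ = ((cr * Cm ^ (β - ε)) / ε * 2 ^ ε) * S * s ^ β := by rw [e5]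
  -- limit argument
  set x0 := (delOp T s)^[m] xs with hx0def
  set B := ((cr * Cm ^ (β - ε)) / ε * 2 ^ ε) * S * s ^ β with hBdef
  have hB0 : 0 ≤ B := by positivity
  apply ContinuousLinearMap.opNorm_le_bound _ hB0
  intro x
  have hlim : Tendsto (fun u => x0 (T u x)) (𝓝[>] (0:ℝ)) (𝓝 (x0 x)) :=
    (x0.continuous.tendsto x).comp (hT.strong x)
  have hlimn : Tendsto (fun u => ‖x0 (T u x)‖) (𝓝[>] (0:ℝ)) (𝓝 ‖x0 x‖) :=
    (continuous_norm.tendsto _).comp hlim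
  apply le_of_tendsto hlimn
  filter_upwards [Ioo_mem_nhdsGT_of_mem (Set.left_mem_Ico.mpr hs)] with u hu
  have h1 : x0 (T u x) = (dualDeriv T 0 x0 u) x := by
    rw [dd_zero_eq]
    rfl
  rw [h1]
  calc ‖(dualDeriv T 0 x0 u) x‖ ≤ ‖dualDeriv T 0 x0 u‖ * ‖x‖ :=
      (dualDeriv T 0 x0 u).le_opNorm x
    _ ≤ B * ‖x‖ := by
        apply mul_le_mul_of_nonneg_right _ (norm_nonneg x)
        exact hconst u hu.1 hu.2.le

/-- `‖xs‖ ≤ K(1, xs)`. -/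
lemma norm_le_K (β₀ β₁ : ℝ) {xs : X →L[ℂ] ℂ} (hmem : MemLambda T β₀ xs) :
    ‖xs‖ ≤ Kfun T β₀ β₁ 1 xs := by
  apply le_Kfun hmem
  intro x0 x1 h0 h1 hx
  have h2 : ‖xs‖ ≤ ‖x0‖ + ‖x1‖ := by
    rw [hx]; exact norm_add_le _ _
  have h3 := norm_le_lambdaNorm (T := T) β₀ x0
  have h4 := norm_le_lambdaNorm (T := T) β₁ x1
  linarith

end SG17
end Part11
section Part12
open Filter Topology Set MeasureTheory Function
namespace SG17
variable {X : Type*} [NormedAddCommGroup X] [NormedSpace ℂ X] [CompleteSpace X]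
variable {T : ℝ → X →L[ℂ] X}

set_option maxHeartbeats 2000000 in
lemma main_fwd (hT : IsHoloSG T) {Cb : ℝ} (hCb : 0 < Cb)
    (hC : ∀ n : ℕ, 1 ≤ n → ∀ t : ℝ, 0 < t →
      ‖iteratedDerivWithin n T (Set.Ioi 0) t‖ ≤ Cb ^ n / t ^ n)
    (β₀ β₁ θ β : ℝ) (hβ₀ : 0 < β₀) (hββ : β₀ < β₁) (hθ0 : 0 < θ) (hθ1 : θ < 1)
    (hβdef : β = (1 - θ) * β₀ + θ * β₁) :
    ∃ c, 0 ≤ c ∧ ∀ xs : X →L[ℂ] ℂ, MemLambda T β xs →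
      MemLambda T β₀ xs ∧
      ∀ t : ℝ, 0 < t → t ^ (-θ) * Kfun T β₀ β₁ t xs ≤ c * lambdaNorm T β xs := by
  have hβlo : β₀ < β := by nlinarith
  have hβhi : β < β₁ := by nlinarith
  set m₀ := mExp β₀
  set m := mExp β
  set m₁ := mExp β₁
  have hm₀β : β₀ < (m₀:ℝ) := mExp_gt β₀
  have hmβ : β < (m:ℝ) := mExp_gt β
  have hm₁β : β₁ < (m₁:ℝ) := mExp_gt β₁
  have hmle : m ≤ m₁ := mExp_mono (by linarith)
  have hβm₁ : β < (m₁:ℝ) := lt_of_lt_of_le hmβ (by exact_mod_cast hmle)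
  obtain ⟨ce, hce0, hemb⟩ := main_emb hT hCb hC β₀ β hβ₀ hβlo
  obtain ⟨cd, hcd0, hder⟩ := x0_deriv_bound hT hCb hC β₀ β hβ₀ hβlo
  obtain ⟨cn, hcn0, hnor⟩ := x0_norm_bound hT hCb hC β₀ β hβ₀ hβlo
  set A1 := Cb ^ (m₁ - m) * 2 ^ ((m₁:ℝ) - β) with hA1def
  have hA10 : (0:ℝ) ≤ A1 := by positivity
  obtain ⟨cy, hcy0, hy⟩ := chainY hT m₁ (e := β - (m₁:ℝ)) (by linarith) m
  set Call := (cn + cd) + (1 + cn) + cy * A1 with hCalldef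
  have hCall0 : 0 ≤ Call := by positivity
  refine ⟨max (1 + ce) Call, le_max_of_le_left (by linarith), ?_⟩
  intro xs hxs
  set S := lsup T β xs with hSdef
  have hS := dd_le_lsup hxs
  have hS0 : 0 ≤ S := lsup_nonneg β xs
  set L := lambdaNorm T β xs with hLdef
  have hL : L = ‖xs‖ + S := lambdaNorm_eq β xs
  have hSL : S ≤ L := lsup_le_lambdaNorm β xs
  have hxL : ‖xs‖ ≤ L := norm_le_lambdaNorm β xs
  have hL0 : 0 ≤ L := lambdaNorm_nonneg β xs
  have hembx : ∀ t : ℝ, 0 < t →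
      ‖dualDeriv T m₀ xs t‖ ≤ ce * L * t ^ (β₀ - (m₀:ℝ)) := by
    intro t ht
    have h := hemb xs S hS0 hS t ht
    have hsx : S + ‖xs‖ = L := by rw [hL]; ring
    rwa [hsx] at h
  have hmem₀ : MemLambda T β₀ xs := memLambda_of hembx
  have hlsup₀ : lsup T β₀ xs ≤ ce * L := lsup_le' hembx
  refine ⟨hmem₀, ?_⟩
  intro t ht
  rcases le_or_gt t 1 with ht1 | ht1
  · -- small t
    set d := β₁ - β₀ with hddef
    have hd0 : 0 < d := by rw [hddef]; linarith
    set s := t ^ (1/d) with hsdef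
    have hs : 0 < s := Real.rpow_pos_of_pos ht _
    have hs1 : s ≤ 1 := Real.rpow_le_one ht.le ht1 (by positivity)
    have hst : s ^ d = t := by
      rw [hsdef, ← Real.rpow_mul ht.le, one_div, inv_mul_cancel₀ (ne_of_gt hd0),
        Real.rpow_one]
    set x0 := (delOp T s)^[m] xs with hx0def
    set x1 := xs - x0 with hx1def
    have hsum : xs = x0 + x1 := by rw [hx1def]; abel
    -- x0 estimates
    have hx0d : ∀ t' : ℝ, 0 < t' →
        ‖dualDeriv T m₀ x0 t'‖ ≤ (cd * S * s ^ (β - β₀)) * t' ^ (β₀ - (m₀:ℝ)) := by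
      intro t' ht'
      have h := hder xs S hS0 hS s hs t' ht'
      calc ‖dualDeriv T m₀ x0 t'‖ ≤ cd * S * s ^ (β - β₀) * t' ^ (β₀ - (m₀:ℝ)) := h
        _ = (cd * S * s ^ (β - β₀)) * t' ^ (β₀ - (m₀:ℝ)) := by ring
    have hmem0x : MemLambda T β₀ x0 := memLambda_of hx0d
    have hlsup0x : lsup T β₀ x0 ≤ cd * S * s ^ (β - β₀) := lsup_le' hx0d
    have hx0n : ‖x0‖ ≤ cn * S * s ^ β := hnor xs S hS0 hS s hs
    -- x1 estimates
    have hx1base : ∀ u : ℝ, 0 < u →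
        ‖dualDeriv T m₁ xs u‖ ≤ (S * A1) * u ^ (β - (m₁:ℝ)) := by
      intro u hu
      have h := dd_high hT hCb hC xs (k₀ := m) (k := m₁) hmle (γ := β) (c := S)
        hmβ.le hS0 hS u hu
      calc ‖dualDeriv T m₁ xs u‖
          ≤ S * (Cb ^ (m₁ - m) * 2 ^ ((m₁:ℝ) - β)) * u ^ (β - (m₁:ℝ)) := h
        _ = (S * A1) * u ^ (β - (m₁:ℝ)) := by rw [hA1def]
    have hyx := hy xs (S * A1) (by positivity) hx1base s hs
    have hx1d : ∀ t' : ℝ, 0 < t' →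
        ‖dualDeriv T m₁ x1 t'‖ ≤ (cy * A1 * S * s ^ (β - β₁)) * t' ^ (β₁ - (m₁:ℝ)) := by
      intro t' ht'
      have h := hyx t' ht'
      have hshift : (t' + s) ^ (β - (m₁:ℝ))
          ≤ s ^ (β - β₁) * t' ^ (β₁ - (m₁:ℝ)) := by
        have hps := pow_shift_le (t := t') (s := s) (β := β) (β₁ := β₁) (m₁ := (m₁:ℝ))
          ht' hs (by linarith) (by linarith) (by linarith)
        calc (t' + s) ^ (β - (m₁:ℝ))
            = t' ^ (β₁ - (m₁:ℝ)) * (t' ^ ((m₁:ℝ) - β₁) * (t' + s) ^ (β - (m₁:ℝ))) := by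
              rw [← mul_assoc, ← Real.rpow_add ht']
              norm_num
          _ ≤ t' ^ (β₁ - (m₁:ℝ)) * s ^ (β - β₁) := by
              apply mul_le_mul_of_nonneg_left hps (Real.rpow_nonneg ht'.le _)
          _ = s ^ (β - β₁) * t' ^ (β₁ - (m₁:ℝ)) := mul_comm _ _
      calc ‖dualDeriv T m₁ x1 t'‖ ≤ cy * (S * A1) * (t' + s) ^ (β - (m₁:ℝ)) := h
        _ ≤ cy * (S * A1) * (s ^ (β - β₁) * t' ^ (β₁ - (m₁:ℝ))) := by
            apply mul_le_mul_of_nonneg_left hshift (by positivity)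
        _ = (cy * A1 * S * s ^ (β - β₁)) * t' ^ (β₁ - (m₁:ℝ)) := by ring
    have hmem1 : MemLambda T β₁ x1 := memLambda_of hx1d
    have hlsup1 : lsup T β₁ x1 ≤ cy * A1 * S * s ^ (β - β₁) := lsup_le' hx1d
    have hx1n : ‖x1‖ ≤ L + cn * S := by
      have hsβ1 : s ^ β ≤ 1 := Real.rpow_le_one hs.le hs1 (by linarith)
      calc ‖x1‖ ≤ ‖xs‖ + ‖x0‖ := norm_sub_le _ _
        _ ≤ L + cn * S * s ^ β := by linarith [hx0n, hxL]
        _ ≤ L + cn * S := by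
            have h6 := mul_le_mul_of_nonneg_left hsβ1 (mul_nonneg hcn0 hS0)
            rw [mul_one] at h6
            linarith
    -- K bound
    have hK := Kfun_le (T := T) ht.le hmem0x hmem1 hsum
    have hsββ₀ : s ^ β ≤ s ^ (β - β₀) :=
      Real.rpow_le_rpow_of_exponent_ge hs hs1 (by linarith)
    have hsp0 : (0:ℝ) ≤ s ^ (β - β₀) := Real.rpow_nonneg hs.le _
    have hN0 : lambdaNorm T β₀ x0 ≤ (cn + cd) * S * s ^ (β - β₀) := by
      rw [lambdaNorm_eq]
      have h1 : ‖x0‖ ≤ cn * S * s ^ (β - β₀) :=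
        le_trans hx0n (mul_le_mul_of_nonneg_left hsββ₀ (mul_nonneg hcn0 hS0))
      have h2 : (cn + cd) * S * s ^ (β - β₀)
          = cn * S * s ^ (β - β₀) + cd * S * s ^ (β - β₀) := by ring
      linarith [hlsup0x]
    have htd : t ≤ s ^ (β - β₀) := by
      rw [← hst]
      exact Real.rpow_le_rpow_of_exponent_ge hs hs1 (by rw [hddef]; linarith)
    have htsβ₁ : t * s ^ (β - β₁) = s ^ (β - β₀) := by
      rw [← hst, ← Real.rpow_add hs]
      congr 1
      rw [hddef]; ring
    have hN1 : t * lambdaNorm T β₁ x1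
        ≤ ((1 + cn) + cy * A1) * L * s ^ (β - β₀) := by
      rw [lambdaNorm_eq]
      have h1 : lambdaNorm T β₁ x1 ≤ (L + cn * S) + cy * A1 * S * s ^ (β - β₁) := by
        rw [lambdaNorm_eq]; linarith [hlsup1, hx1n]
      have h1' : ‖x1‖ + lsup T β₁ x1 ≤ (L + cn * S) + cy * A1 * S * s ^ (β - β₁) := by
        linarith [hlsup1, hx1n]
      have h2 : t * (‖x1‖ + lsup T β₁ x1)
          ≤ t * ((L + cn * S) + cy * A1 * S * s ^ (β - β₁)) :=
        mul_le_mul_of_nonneg_left h1' ht.le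
      have h3 : t * ((L + cn * S) + cy * A1 * S * s ^ (β - β₁))
          = t * (L + cn * S) + cy * A1 * S * (t * s ^ (β - β₁)) := by ring
      have h4 : t * (L + cn * S) ≤ s ^ (β - β₀) * (L + cn * S) :=
        mul_le_mul_of_nonneg_right htd (by have := mul_nonneg hcn0 hS0; linarith)
      have h5 : cy * A1 * S * (t * s ^ (β - β₁)) = cy * A1 * S * s ^ (β - β₀) := by
        rw [htsβ₁]
      calc t * (‖x1‖ + lsup T β₁ x1)
          ≤ t * (L + cn * S) + cy * A1 * S * (t * s ^ (β - β₁)) := by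
            rw [← h3]; exact h2
        _ ≤ s ^ (β - β₀) * (L + cn * S) + cy * A1 * S * s ^ (β - β₀) := by
            rw [h5]; linarith
        _ = L * s ^ (β - β₀) + cn * S * s ^ (β - β₀) + cy * A1 * S * s ^ (β - β₀) := by
            ring
        _ ≤ L * s ^ (β - β₀) + cn * L * s ^ (β - β₀) + cy * A1 * L * s ^ (β - β₀) := by
            have e6 : cn * S * s ^ (β - β₀) ≤ cn * L * s ^ (β - β₀) :=
              mul_le_mul_of_nonneg_right (mul_le_mul_of_nonneg_left hSL hcn0) hsp0
            have e7 : cy * A1 * S * s ^ (β - β₀) ≤ cy * A1 * L * s ^ (β - β₀) :=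
              mul_le_mul_of_nonneg_right (mul_le_mul_of_nonneg_left hSL (by positivity)) hsp0
            linarith
        _ = ((1 + cn) + cy * A1) * L * s ^ (β - β₀) := by ring
    have hKtot : Kfun T β₀ β₁ t xs ≤ Call * L * s ^ (β - β₀) := by
      calc Kfun T β₀ β₁ t xs ≤ lambdaNorm T β₀ x0 + t * lambdaNorm T β₁ x1 := hK
        _ ≤ (cn + cd) * S * s ^ (β - β₀) + ((1 + cn) + cy * A1) * L * s ^ (β - β₀) := by
            linarith [hN0, hN1]
        _ ≤ Call * L * s ^ (β - β₀) := by
            have e8 : (cn + cd) * S * s ^ (β - β₀) ≤ (cn + cd) * L * s ^ (β - β₀) :=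
              mul_le_mul_of_nonneg_right
                (mul_le_mul_of_nonneg_left hSL (by linarith)) hsp0
            have e9 : (cn + cd) * L * s ^ (β - β₀) + ((1 + cn) + cy * A1) * L * s ^ (β - β₀)
                = Call * L * s ^ (β - β₀) := by rw [hCalldef]; ring
            linarith
    have hstheta : s ^ (β - β₀) = t ^ θ := by
      have h1 : β - β₀ = d * θ := by rw [hddef, hβdef]; ring
      rw [h1, Real.rpow_mul hs.le, hst]
    calc t ^ (-θ) * Kfun T β₀ β₁ t xs
        ≤ t ^ (-θ) * (Call * L * t ^ θ) := by
          apply mul_le_mul_of_nonneg_left _ (Real.rpow_nonneg ht.le _)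
          rw [← hstheta]
          exact hKtot
      _ = Call * L * (t ^ θ * t ^ (-θ)) := by ring
      _ = Call * L := by rw [rpow_cancel ht θ]; ring
      _ ≤ max (1 + ce) Call * L := by
          apply mul_le_mul_of_nonneg_right (le_max_right _ _) hL0
  · -- large t
    have hK := Kfun_le (T := T) ht.le hmem₀ (memLambda_zero β₁)
      (by simp : xs = xs + 0)
    rw [lambdaNorm_zero, mul_zero, add_zero] at hK
    have hN0 : lambdaNorm T β₀ xs ≤ (1 + ce) * L := by
      rw [lambdaNorm_eq]
      linarith [hlsup₀, hxL]
    have htθ : t ^ (-θ) ≤ 1 :=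
      Real.rpow_le_one_of_one_le_of_nonpos ht1.le (by linarith)
    have hKn : 0 ≤ Kfun T β₀ β₁ t xs := Kfun_nonneg β₀ β₁ t ht.le xs
    calc t ^ (-θ) * Kfun T β₀ β₁ t xs ≤ 1 * Kfun T β₀ β₁ t xs :=
        mul_le_mul_of_nonneg_right htθ hKn
      _ = Kfun T β₀ β₁ t xs := one_mul _
      _ ≤ (1 + ce) * L := le_trans hK hN0
      _ ≤ max (1 + ce) Call * L :=
          mul_le_mul_of_nonneg_right (le_max_left _ _) hL0

end SG17
end Part12
/-- for `0 < β₀ < β₁`, `0 < θ < 1` and `β = (1−θ)β₀ + θβ₁`, the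
interpolation space `(Λ_A^{β₀}, Λ_A^{β₁})_θ` obtained by the K-method of Peetre
(i.e. the set of `x* ∈ Λ_A^{β₀}` with `sup_{t>0} t^{−θ} K(t,x*) < ∞`) coincides
with `Λ_A^β`, and the interpolation norm `‖x*‖_θ = sup_{t>0} t^{−θ} K(t,x*)` is
equivalent to `‖x*‖_{Λ_A^β}`. -/
theorem stmt17 (T : ℝ → X →L[ℂ] X) (hT : IsHoloSG T)
    (β₀ β₁ θ : ℝ) (hβ₀ : 0 < β₀) (hβ : β₀ < β₁) (hθ0 : 0 < θ) (hθ1 : θ < 1) :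
    (∀ xs : X →L[ℂ] ℂ,
      (MemLambda T β₀ xs ∧
        ∃ M : ℝ, ∀ t : ℝ, 0 < t → t ^ (-θ) * Kfun T β₀ β₁ t xs ≤ M)
      ↔ MemLambda T ((1 - θ) * β₀ + θ * β₁) xs) ∧
    ∃ C : ℝ, 1 < C ∧ ∀ xs : X →L[ℂ] ℂ,
      MemLambda T ((1 - θ) * β₀ + θ * β₁) xs →
      C⁻¹ * lambdaNorm T ((1 - θ) * β₀ + θ * β₁) xs
          ≤ (⨆ t : Set.Ioi (0:ℝ), (t : ℝ) ^ (-θ) * Kfun T β₀ β₁ t xs) ∧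
      (⨆ t : Set.Ioi (0:ℝ), (t : ℝ) ^ (-θ) * Kfun T β₀ β₁ t xs)
          ≤ C * lambdaNorm T ((1 - θ) * β₀ + θ * β₁) xs := by
  obtain ⟨Cb, hCb, hC⟩ := hT.derivBound
  obtain ⟨cf, hcf0, hfwd⟩ := SG17.main_fwd hT hCb hC β₀ β₁ θ ((1-θ)*β₀+θ*β₁)
    hβ₀ hβ hθ0 hθ1 rfl
  obtain ⟨cr, hcr0, hrev⟩ := SG17.main_rev hT hCb hC β₀ β₁ θ ((1-θ)*β₀+θ*β₁)
    hβ₀ hβ hθ0 hθ1 rfl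
  constructor
  · intro xs
    constructor
    · rintro ⟨hmem₀, M, hM⟩
      have hM0 : 0 ≤ M := by
        have h1 : (0:ℝ) ≤ (1:ℝ) ^ (-θ) * Kfun T β₀ β₁ 1 xs := by
          rw [Real.one_rpow, one_mul]
          exact SG17.Kfun_nonneg β₀ β₁ 1 zero_le_one xs
        linarith [hM 1 one_pos]
      exact ⟨cr * M, hrev xs M hM0 hmem₀ hM⟩
    · intro hmem
      obtain ⟨hmem₀, hKb⟩ := hfwd xs hmem
      exact ⟨hmem₀, cf * lambdaNorm T ((1-θ)*β₀+θ*β₁) xs, hKb⟩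
  · refine ⟨max cf (1 + cr) + 2, by
      have := le_max_left cf (1 + cr)
      linarith [le_max_right cf (1+cr)], ?_⟩
    intro xs hmem
    obtain ⟨hmem₀, hKb⟩ := hfwd xs hmem
    have hL0 : 0 ≤ lambdaNorm T ((1-θ)*β₀+θ*β₁) xs := SG17.lambdaNorm_nonneg _ xs
    have hGb : ∀ t : Set.Ioi (0:ℝ), (t:ℝ) ^ (-θ) * Kfun T β₀ β₁ t xs
        ≤ cf * lambdaNorm T ((1-θ)*β₀+θ*β₁) xs := fun t => hKb t t.2
    have hbdd : BddAbove (Set.range fun t : Set.Ioi (0:ℝ) =>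
        (t:ℝ) ^ (-θ) * Kfun T β₀ β₁ t xs) := by
      refine ⟨cf * lambdaNorm T ((1-θ)*β₀+θ*β₁) xs, ?_⟩
      rintro v ⟨t, rfl⟩
      exact hGb t
    have hSup_le : (⨆ t : Set.Ioi (0:ℝ), (t:ℝ) ^ (-θ) * Kfun T β₀ β₁ t xs)
        ≤ cf * lambdaNorm T ((1-θ)*β₀+θ*β₁) xs := ciSup_le hGb
    have hSup0 : 0 ≤ ⨆ t : Set.Ioi (0:ℝ), (t:ℝ) ^ (-θ) * Kfun T β₀ β₁ t xs :=
      Real.iSup_nonneg fun t => mul_nonneg (Real.rpow_nonneg (le_of_lt t.2) _)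
        (SG17.Kfun_nonneg β₀ β₁ t (le_of_lt t.2) xs)
    have hval : ∀ t : ℝ, 0 < t → t ^ (-θ) * Kfun T β₀ β₁ t xs
        ≤ ⨆ t' : Set.Ioi (0:ℝ), (t':ℝ) ^ (-θ) * Kfun T β₀ β₁ t' xs :=
      fun t ht => le_ciSup hbdd ⟨t, ht⟩
    have hrb := hrev xs (⨆ t' : Set.Ioi (0:ℝ), (t':ℝ) ^ (-θ) * Kfun T β₀ β₁ t' xs)
      hSup0 hmem₀ hval
    have hlsupb : SG17.lsup T ((1-θ)*β₀+θ*β₁) xs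
        ≤ cr * ⨆ t' : Set.Ioi (0:ℝ), (t':ℝ) ^ (-θ) * Kfun T β₀ β₁ t' xs :=
      SG17.lsup_le' hrb
    have hnormb : ‖xs‖ ≤ ⨆ t' : Set.Ioi (0:ℝ), (t':ℝ) ^ (-θ) * Kfun T β₀ β₁ t' xs := by
      have h1 : ‖xs‖ ≤ Kfun T β₀ β₁ 1 xs := SG17.norm_le_K β₀ β₁ hmem₀
      have h2 := hval 1 one_pos
      rw [Real.one_rpow, one_mul] at h2
      linarith
    have hLb : lambdaNorm T ((1-θ)*β₀+θ*β₁) xs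
        ≤ (1 + cr) * ⨆ t' : Set.Ioi (0:ℝ), (t':ℝ) ^ (-θ) * Kfun T β₀ β₁ t' xs := by
      rw [SG17.lambdaNorm_eq]
      have h3 : (1 + cr) * (⨆ t' : Set.Ioi (0:ℝ), (t':ℝ) ^ (-θ) * Kfun T β₀ β₁ t' xs)
          = (⨆ t' : Set.Ioi (0:ℝ), (t':ℝ) ^ (-θ) * Kfun T β₀ β₁ t' xs)
            + cr * ⨆ t' : Set.Ioi (0:ℝ), (t':ℝ) ^ (-θ) * Kfun T β₀ β₁ t' xs := by ring
      rw [h3]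
      exact add_le_add hnormb hlsupb
    have hCpos : (0:ℝ) < max cf (1 + cr) + 2 := by
      have := le_max_left cf (1 + cr)
      linarith
    constructor
    · rw [inv_mul_le_iff₀ hCpos]
      calc lambdaNorm T ((1-θ)*β₀+θ*β₁) xs
          ≤ (1 + cr) * ⨆ t' : Set.Ioi (0:ℝ), (t':ℝ) ^ (-θ) * Kfun T β₀ β₁ t' xs := hLb
        _ ≤ (max cf (1 + cr) + 2)
            * ⨆ t' : Set.Ioi (0:ℝ), (t':ℝ) ^ (-θ) * Kfun T β₀ β₁ t' xs := by
            apply mul_le_mul_of_nonneg_right _ hSup0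
            have := le_max_right cf (1 + cr)
            linarith
    · calc (⨆ t : Set.Ioi (0:ℝ), (t:ℝ) ^ (-θ) * Kfun T β₀ β₁ t xs)
          ≤ cf * lambdaNorm T ((1-θ)*β₀+θ*β₁) xs := hSup_le
        _ ≤ (max cf (1 + cr) + 2) * lambdaNorm T ((1-θ)*β₀+θ*β₁) xs := by
            apply mul_le_mul_of_nonneg_right _ hL0
            have := le_max_left cf (1 + cr)
            linarith
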